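/- arXiv:1301.5268 — 3 statements merged into one kernel-verified Lean document; each statement's English description precedes it below -/
import Mathlib

section
/- Let Γ ⊊ Z^d be (K,Q)-relatively dense and H = -Δ + V with V bounded. Then for all t ≥ 0: E_Γ(H,t) - E_∅(H) ≥ (Q/(2dK-1)) (Y^{-(2dK-1)} - (Y + t)^{-(2dK-1)}), where Y = 2d + 1 + spr(V). -/
open scoped BigOperators

noncomputable section

/-- `ℤ^d`. -/
abbrev Zd (d : ℕ) := Fin d → ℤ

/-- `ℓ¹` distance on `ℤ^d`. -/
def dist1 {d : ℕ} (x y : Zd d) : ℕ := ∑ i, (x i - y i).natAbs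

/-- the `i`-th coordinate unit vector. -/
def unitVec {d : ℕ} (i : Fin d) : Zd d := fun j => if j = i then 1 else 0

/-- the negative discrete Laplacian: `(-Δφ)(x) = Σ_{‖x-y‖₁=1} (φ(x) - φ(y))`. -/
def negLap {d : ℕ} (φ : Zd d → ℝ) (x : Zd d) : ℝ :=
  ∑ i, ((φ x - φ (x + unitVec i)) + (φ x - φ (x - unitVec i)))

/-- characteristic function of a set. -/
def chi {d : ℕ} (A : Set (Zd d)) : Zd d → ℝ := A.indicator fun _ => 1

/-- edge boundary `∂A = {(x,y) ∈ A × Aᶜ : ‖x-y‖₁ = 1}`. -/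
def bdry {d : ℕ} (A : Set (Zd d)) : Set (Zd d × Zd d) :=
  {p | p.1 ∈ A ∧ p.2 ∉ A ∧ dist1 p.1 p.2 = 1}

/-- squared `ℓ²` norm (for finitely supported functions). -/
def norm2 {d : ℕ} (φ : Zd d → ℝ) : ℝ := ∑ᶠ x, φ x ^ 2

/-- quadratic form `⟨φ, (-Δ + V)φ⟩` (for finitely supported `φ`). -/
def energy {d : ℕ} (V : Zd d → ℝ) (φ : Zd d → ℝ) : ℝ :=
  ∑ᶠ x, φ x * (negLap φ x + V x * φ x)

/-- `V` is a bounded potential. -/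
def BddPot {d : ℕ} (V : Zd d → ℝ) : Prop := ∃ C, ∀ x, |V x| ≤ C

/-- the spread `spr(V) = sup V - inf V` of a bounded potential. -/
def spr {d : ℕ} (V : Zd d → ℝ) : ℝ := sSup (Set.range V) - sInf (Set.range V)

/-- `E_∅(H) = inf σ(-Δ + V)`, characterized variationally over normalized finitely
supported functions. -/
def E0 {d : ℕ} (V : Zd d → ℝ) : ℝ :=
  sInf {r | ∃ φ : Zd d → ℝ, (Function.support φ).Finite ∧ norm2 φ = 1 ∧ r = energy V φ}

/-- `E_Γ(H) = inf σ(H_Γ)`, the ground state energy of the `Γ`-trimmed operator,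
characterized variationally over normalized finitely supported functions vanishing on `Γ`. -/
def EG {d : ℕ} (V : Zd d → ℝ) (Γ : Set (Zd d)) : ℝ :=
  sInf {r | ∃ φ : Zd d → ℝ, (Function.support φ).Finite ∧ (∀ x ∈ Γ, φ x = 0) ∧
    norm2 φ = 1 ∧ r = energy V φ}

/-- `E_Γ(H,t) = inf σ(H + t χ_Γ)`. -/
def EGt {d : ℕ} (V : Zd d → ℝ) (Γ : Set (Zd d)) (t : ℝ) : ℝ :=
  E0 fun x => V x + t * chi Γ x

/-- the open box `Λ⁰_K(ζ) = {y : ‖y-ζ‖_∞ < K/2}`. -/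
def Lam0 {d : ℕ} (K : ℕ) (ζ : Zd d) : Set (Zd d) := {y | ∀ i, 2 * (y i - ζ i).natAbs < K}

/-- `Γ` is `(K,Q)`-relatively dense: `|Γ ∩ Λ⁰_K(ζ)| ≥ Q` for all `ζ ∈ KZ^d`. -/
def RelDense {d : ℕ} (Γ : Set (Zd d)) (K Q : ℕ) : Prop :=
  ∀ z : Zd d, Q ≤ (Γ ∩ Lam0 K fun i => (K : ℤ) * z i).ncard

/-- `K_* = K` if `K` is odd, `K+1` if `K` is even. -/
def Kstar (K : ℕ) : ℕ := if K % 2 = 1 then K else K + 1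

/-- `⟨χ_A, (-Δ)χ_A⟩` for a finite set `A`; for `A ⊆ Γᶜ` this coincides with
`⟨χ_A, (-Δ_Γ)χ_A⟩` for the `Γ`-trimmed Laplacian. -/
def qform {d : ℕ} (A : Finset (Zd d)) : ℝ := ∑ x ∈ A, negLap (chi ↑A) x

/-- Cheeger constant `β(Γ)` of the `Γ`-trimmed Laplacian. -/
def betaG {d : ℕ} (Γ : Set (Zd d)) : ℝ :=
  sInf {r | ∃ A : Finset (Zd d), A.Nonempty ∧ (↑A : Set (Zd d)) ⊆ Γᶜ ∧
    r = qform A / A.card}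

/-- `⟨χ_A, H(t)χ_A⟩ = ⟨χ_A, (-Δ)χ_A⟩ + t|A ∩ Γ|` for a finite set `A`. -/
def qformT {d : ℕ} (Γ : Set (Zd d)) (t : ℝ) (A : Finset (Zd d)) : ℝ :=
  qform A + t * ((↑A ∩ Γ : Set (Zd d)).ncard)

/-- Cheeger constant `β(t)` of `H(t) = -Δ + t χ_Γ`. -/
def betaT {d : ℕ} (Γ : Set (Zd d)) (t : ℝ) : ℝ :=
  sInf {r | ∃ A : Finset (Zd d), A.Nonempty ∧ r = qformT Γ t A / A.card}

/-- the box `Λ_L(x₀) = {y : ‖y-x₀‖_∞ ≤ L/2}`. -/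
def box {d : ℕ} (L : ℕ) (x₀ : Zd d) : Set (Zd d) := {y | ∀ i, 2 * (y i - x₀ i).natAbs ≤ L}

/-- `φ` is an eigenfunction of `H_Λ = (-Δ + V)_Λ` with eigenvalue `E`. -/
def eigOn {d : ℕ} (V : Zd d → ℝ) (Λ : Set (Zd d)) (φ : Zd d → ℝ) (E : ℝ) : Prop :=
  (∀ x ∉ Λ, φ x = 0) ∧ ∀ x ∈ Λ, negLap φ x + V x * φ x = E * φ x

/-- `E^Λ = inf σ(H_Λ)`, variationally. -/
def Ebox {d : ℕ} (V : Zd d → ℝ) (Λ : Set (Zd d)) : ℝ :=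
  sInf {r | ∃ φ : Zd d → ℝ, (∀ x ∉ Λ, φ x = 0) ∧ norm2 φ = 1 ∧ r = energy V φ}

namespace S13
open Function Finset

variable {d : ℕ}

lemma supp_mul_left (φ g : Zd d → ℝ) :
    support (fun x => φ x * g x) ⊆ support φ := by
  intro x hx
  simp only [mem_support] at *
  exact fun h => hx (by simp [h])

lemma supp_sq (φ : Zd d → ℝ) : support (fun x => φ x ^ 2) ⊆ support φ := by
  intro x hx; simp only [mem_support] at *; exact fun h => hx (by simp [h])

lemma energy_eq_sum (W φ : Zd d → ℝ) {B : Finset (Zd d)} (h : support φ ⊆ ↑B) :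
    energy W φ = ∑ x ∈ B, φ x * (negLap φ x + W x * φ x) :=
  finsum_eq_sum_of_support_subset _ ((supp_mul_left φ _).trans h)

lemma norm2_eq_sum (φ : Zd d → ℝ) {B : Finset (Zd d)} (h : support φ ⊆ ↑B) :
    norm2 φ = ∑ x ∈ B, φ x ^ 2 :=
  finsum_eq_sum_of_support_subset _ ((supp_sq φ).trans h)

lemma norm2_nonneg (φ : Zd d → ℝ) : 0 ≤ norm2 φ :=
  finsum_nonneg fun x => sq_nonneg _

lemma sum_shift (f : Zd d → ℝ) (v : Zd d) {B : Finset (Zd d)}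
    (h1 : support f ⊆ ↑B) (h2 : support (fun x => f (x + v)) ⊆ ↑B) :
    ∑ x ∈ B, f (x + v) = ∑ x ∈ B, f x := by
  rw [← finsum_eq_sum_of_support_subset _ h2, ← finsum_eq_sum_of_support_subset _ h1]
  exact finsum_comp_equiv (Equiv.addRight v)

/-- neighborhood closure of a finset -/
def clos (S : Finset (Zd d)) : Finset (Zd d) :=
  S ∪ (Finset.univ : Finset (Fin d)).biUnion
    (fun i => S.image (· - unitVec i) ∪ S.image (· + unitVec i))

lemma subset_clos (S : Finset (Zd d)) : S ⊆ clos S := Finset.subset_union_left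

lemma sub_mem_clos {S : Finset (Zd d)} {x : Zd d} (i : Fin d) (hx : x + unitVec i ∈ S) :
    x ∈ clos S := by
  apply Finset.mem_union_right
  refine Finset.mem_biUnion.2 ⟨i, Finset.mem_univ _, Finset.mem_union_left _ ?_⟩
  exact Finset.mem_image.2 ⟨x + unitVec i, hx, by abel⟩

lemma add_mem_clos {S : Finset (Zd d)} {x : Zd d} (i : Fin d) (hx : x - unitVec i ∈ S) :
    x ∈ clos S := by
  apply Finset.mem_union_right
  refine Finset.mem_biUnion.2 ⟨i, Finset.mem_univ _, Finset.mem_union_right _ ?_⟩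
  exact Finset.mem_image.2 ⟨x - unitVec i, hx, by abel⟩

variable {d : ℕ}
open Function Finset

lemma sum_shift' (f : Zd d → ℝ) (v : Zd d) {B : Finset (Zd d)}
    (h1 : support f ⊆ ↑B) (h2 : support (fun x => f (x - v)) ⊆ ↑B) :
    ∑ x ∈ B, f (x - v) = ∑ x ∈ B, f x := by
  rw [← finsum_eq_sum_of_support_subset _ h2, ← finsum_eq_sum_of_support_subset _ h1]
  exact finsum_comp_equiv (Equiv.subRight v)

lemma dirichlet_aux (φ : Zd d → ℝ) (S : Finset (Zd d)) (hS : support φ ⊆ ↑S) (i : Fin d) :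
    ∑ x ∈ clos S, φ x * ((φ x - φ (x + unitVec i)) + (φ x - φ (x - unitVec i)))
      = ∑ x ∈ clos S, (φ x - φ (x + unitVec i))^2 := by
  set g : Zd d → ℝ := fun x => φ (x + unitVec i) * (φ (x + unitVec i) - φ x) with hg
  have hgs : support g ⊆ ↑(clos S) := by
    intro x hx
    have hφ : φ (x + unitVec i) ≠ 0 := by
      intro h; apply hx; simp [hg, h]
    exact Finset.mem_coe.2 (sub_mem_clos i (Finset.mem_coe.1 (hS hφ)))
  have hgs2 : support (fun x => g (x - unitVec i)) ⊆ ↑(clos S) := by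
    intro x hx
    have hφ : φ x ≠ 0 := by
      intro h; apply hx; simp [hg, sub_add_cancel, h]
    exact Finset.mem_coe.2 (subset_clos S (Finset.mem_coe.1 (hS hφ)))
  have key : ∑ x ∈ clos S, g (x - unitVec i) = ∑ x ∈ clos S, g x :=
    sum_shift' g (unitVec i) hgs hgs2
  have e1 : ∀ x : Zd d, φ x * (φ x - φ (x - unitVec i)) = g (x - unitVec i) := by
    intro x; simp only [hg, sub_add_cancel]
  calc ∑ x ∈ clos S, φ x * ((φ x - φ (x + unitVec i)) + (φ x - φ (x - unitVec i)))
      = ∑ x ∈ clos S, (φ x * (φ x - φ (x + unitVec i)) + g (x - unitVec i)) := by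
        refine Finset.sum_congr rfl fun x _ => ?_
        rw [← e1 x]; ring
    _ = ∑ x ∈ clos S, φ x * (φ x - φ (x + unitVec i)) + ∑ x ∈ clos S, g (x - unitVec i) :=
        Finset.sum_add_distrib
    _ = ∑ x ∈ clos S, φ x * (φ x - φ (x + unitVec i)) + ∑ x ∈ clos S, g x := by rw [key]
    _ = ∑ x ∈ clos S, (φ x - φ (x + unitVec i))^2 := by
        rw [← Finset.sum_add_distrib]
        refine Finset.sum_congr rfl fun x _ => ?_
        simp only [hg]; ring

lemma clos_coe_subset {S : Finset (Zd d)} : (↑S : Set (Zd d)) ⊆ ↑(clos S) := by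
  intro x hx; exact Finset.mem_coe.2 (subset_clos S (Finset.mem_coe.1 hx))

lemma dirichlet_sum (W φ : Zd d → ℝ) (S : Finset (Zd d)) (hS : support φ ⊆ ↑S) :
    energy W φ = (∑ i : Fin d, ∑ x ∈ clos S, (φ x - φ (x + unitVec i))^2)
      + ∑ x ∈ clos S, W x * φ x ^ 2 := by
  have hB : support φ ⊆ ↑(clos S) := hS.trans clos_coe_subset
  rw [energy_eq_sum W φ hB]
  have : ∀ x : Zd d, φ x * (negLap φ x + W x * φ x)
      = (∑ i : Fin d, φ x * ((φ x - φ (x + unitVec i)) + (φ x - φ (x - unitVec i))))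
        + W x * φ x ^ 2 := by
    intro x; rw [negLap, mul_add, Finset.mul_sum]; ring
  simp_rw [this]
  rw [Finset.sum_add_distrib, Finset.sum_comm]
  congr 1
  exact Finset.sum_congr rfl fun i _ => dirichlet_aux φ S hS i

lemma energy_ge (W φ : Zd d → ℝ) (S : Finset (Zd d)) (hS : support φ ⊆ ↑S)
    (c₁ : ℝ) (hc : ∀ x, c₁ ≤ W x) : c₁ * norm2 φ ≤ energy W φ := by
  rw [dirichlet_sum W φ S hS, norm2_eq_sum φ (hS.trans clos_coe_subset), Finset.mul_sum]
  have h1 : 0 ≤ ∑ i : Fin d, ∑ x ∈ clos S, (φ x - φ (x + unitVec i))^2 :=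
    Finset.sum_nonneg fun i _ => Finset.sum_nonneg fun x _ => sq_nonneg _
  have h2 : ∑ x ∈ clos S, c₁ * φ x ^ 2 ≤ ∑ x ∈ clos S, W x * φ x ^ 2 :=
    Finset.sum_le_sum fun x _ => mul_le_mul_of_nonneg_right (hc x) (sq_nonneg _)
  linarith

lemma support_abs (φ : Zd d → ℝ) : support (fun x => |φ x|) = support φ := by
  ext x; simp [abs_ne_zero]

lemma energy_abs_le (W φ : Zd d → ℝ) (S : Finset (Zd d)) (hS : support φ ⊆ ↑S) :
    energy W (fun x => |φ x|) ≤ energy W φ := by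
  have hS' : support (fun x => |φ x|) ⊆ ↑S := by rw [support_abs]; exact hS
  rw [dirichlet_sum W φ S hS, dirichlet_sum W _ S hS']
  have h1 : ∀ i : Fin d, ∀ x : Zd d, (|φ x| - |φ (x + unitVec i)|)^2
      ≤ (φ x - φ (x + unitVec i))^2 := by
    intro i x
    rw [← sq_abs (|φ x| - _), ← sq_abs (φ x - _)]
    exact pow_le_pow_left₀ (abs_nonneg _) (abs_abs_sub_abs_le_abs_sub _ _) 2
  have h2 : ∀ x : Zd d, W x * |φ x| ^ 2 = W x * φ x ^ 2 := by intro x; rw [sq_abs]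
  simp_rw [h2]
  refine add_le_add ?_ le_rfl
  refine Finset.sum_le_sum fun i _ => Finset.sum_le_sum fun x _ => h1 i x

lemma norm2_abs (φ : Zd d → ℝ) : norm2 (fun x => |φ x|) = norm2 φ := by
  unfold norm2; simp_rw [sq_abs]

def BL {d : ℕ} (W φ ψ : Zd d → ℝ) : ℝ := ∑ᶠ x, φ x * (negLap ψ x + W x * ψ x)

variable {d : ℕ}
open Function Finset

lemma BL_eq_sum (W φ ψ : Zd d → ℝ) {B : Finset (Zd d)} (h : support φ ⊆ ↑B) :
    BL W φ ψ = ∑ x ∈ B, φ x * (negLap ψ x + W x * ψ x) :=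
  finsum_eq_sum_of_support_subset _ ((supp_mul_left φ _).trans h)

lemma BL_self (W φ : Zd d → ℝ) : BL W φ φ = energy W φ := rfl

lemma negLap_add (φ ψ : Zd d → ℝ) (x : Zd d) :
    negLap (fun y => φ y + ψ y) x = negLap φ x + negLap ψ x := by
  unfold negLap; rw [← Finset.sum_add_distrib]
  exact Finset.sum_congr rfl fun i _ => by ring

lemma negLap_smul (c : ℝ) (φ : Zd d → ℝ) (x : Zd d) :
    negLap (fun y => c * φ y) x = c * negLap φ x := by
  unfold negLap; rw [Finset.mul_sum]
  exact Finset.sum_congr rfl fun i _ => by ring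

lemma cross_shift (φ ψ : Zd d → ℝ) (S : Finset (Zd d)) (hφ : support φ ⊆ ↑S)
    (hψ : support ψ ⊆ ↑S) (i : Fin d) :
    ∑ x ∈ clos S, φ x * ψ (x - unitVec i) = ∑ x ∈ clos S, φ (x + unitVec i) * ψ x := by
  have h1 : support (fun x => φ (x + unitVec i) * ψ x) ⊆ ↑(clos S) := by
    intro x hx
    have : ψ x ≠ 0 := fun h => hx (by simp [h])
    exact clos_coe_subset (hψ this)
  have e1 : (fun x => (fun y => φ (y + unitVec i) * ψ y) (x - unitVec i))
      = fun x => φ x * ψ (x - unitVec i) := by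
    funext x; simp [sub_add_cancel]
  have h2 : support (fun x => (fun y => φ (y + unitVec i) * ψ y) (x - unitVec i)) ⊆ ↑(clos S) := by
    rw [e1]; intro x hx
    have : φ x ≠ 0 := fun h => hx (by simp [h])
    exact clos_coe_subset (hφ this)
  have := sum_shift' (fun y => φ (y + unitVec i) * ψ y) (unitVec i) h1 h2
  rw [e1] at this; exact this

lemma pointwise_expand (W f g : Zd d → ℝ) (x : Zd d) :
    f x * (negLap g x + W x * g x)
      = (∑ i : Fin d, (f x * (g x - g (x + unitVec i)) + f x * (g x - g (x - unitVec i))))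
        + W x * (f x * g x) := by
  rw [negLap, mul_add, Finset.mul_sum]
  refine congrArg₂ (· + ·) (Finset.sum_congr rfl fun i _ => by ring) (by ring)

lemma sum_BL_expand (W f g : Zd d → ℝ) (S : Finset (Zd d)) (hf : support f ⊆ ↑S)
    (hg : support g ⊆ ↑S) :
    BL W f g = (∑ i : Fin d,
        (2 * ∑ x ∈ clos S, f x * g x
          - ∑ x ∈ clos S, f x * g (x + unitVec i) - ∑ x ∈ clos S, f (x + unitVec i) * g x))
      + ∑ x ∈ clos S, W x * (f x * g x) := by
  rw [BL_eq_sum W f g (hf.trans clos_coe_subset)]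
  simp_rw [pointwise_expand]
  rw [Finset.sum_add_distrib, Finset.sum_comm]
  congr 1
  refine Finset.sum_congr rfl fun i _ => ?_
  rw [Finset.sum_add_distrib]
  have hb : ∑ x ∈ clos S, f x * (g x - g (x - unitVec i))
      = ∑ x ∈ clos S, f x * g x - ∑ x ∈ clos S, f (x + unitVec i) * g x := by
    simp_rw [mul_sub]
    rw [Finset.sum_sub_distrib, cross_shift f g S hf hg i]
  have ha : ∑ x ∈ clos S, f x * (g x - g (x + unitVec i))
      = ∑ x ∈ clos S, f x * g x - ∑ x ∈ clos S, f x * g (x + unitVec i) := by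
    simp_rw [mul_sub]
    rw [Finset.sum_sub_distrib]
  rw [ha, hb]; ring

lemma BL_symm (W φ ψ : Zd d → ℝ) (S : Finset (Zd d)) (hφ : support φ ⊆ ↑S)
    (hψ : support ψ ⊆ ↑S) : BL W φ ψ = BL W ψ φ := by
  rw [sum_BL_expand W φ ψ S hφ hψ, sum_BL_expand W ψ φ S hψ hφ]
  have c1 : ∑ x ∈ clos S, φ x * ψ x = ∑ x ∈ clos S, ψ x * φ x :=
    Finset.sum_congr rfl fun x _ => by ring
  have c2 : ∀ i : Fin d, ∑ x ∈ clos S, φ x * ψ (x + unitVec i)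
      = ∑ x ∈ clos S, ψ (x + unitVec i) * φ x :=
    fun i => Finset.sum_congr rfl fun x _ => by ring
  have c3 : ∀ i : Fin d, ∑ x ∈ clos S, φ (x + unitVec i) * ψ x
      = ∑ x ∈ clos S, ψ x * φ (x + unitVec i) :=
    fun i => Finset.sum_congr rfl fun x _ => by ring
  have c4 : ∀ x : Zd d, W x * (φ x * ψ x) = W x * (ψ x * φ x) := fun x => by ring
  simp_rw [c4]
  congr 1
  refine Finset.sum_congr rfl fun i _ => ?_
  rw [c1, c2 i, c3 i]; ring

lemma supp_mul_left' {c : ℝ} (φ : Zd d → ℝ) : support (fun x => c * φ x) ⊆ support φ := by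
  intro x hx
  simp only [mem_support] at *
  exact fun h => hx (by simp [h])

lemma supp_add (φ ψ : Zd d → ℝ) :
    support (fun x => φ x + ψ x) ⊆ support φ ∪ support ψ := by
  intro x hx
  simp only [mem_support] at hx
  by_contra h
  simp only [Set.mem_union, mem_support, not_or, not_not] at h
  exact hx (by rw [h.1, h.2, add_zero])

lemma energy_add (W φ ψ : Zd d → ℝ) (S : Finset (Zd d)) (hφ : support φ ⊆ ↑S)
    (hψ : support ψ ⊆ ↑S) :
    energy W (fun x => φ x + ψ x) = energy W φ + 2 * BL W φ ψ + energy W ψ := by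
  have hsum : support (fun x => φ x + ψ x) ⊆ ↑S :=
    (supp_add φ ψ).trans (Set.union_subset hφ hψ)
  rw [energy_eq_sum _ _ (hsum.trans clos_coe_subset),
    energy_eq_sum W φ (hφ.trans clos_coe_subset),
    energy_eq_sum W ψ (hψ.trans clos_coe_subset),
    BL_eq_sum W φ ψ (hφ.trans (clos_coe_subset (S := S)))]
  have key : ∀ x : Zd d, (φ x + ψ x) * (negLap (fun y => φ y + ψ y) x + W x * (φ x + ψ x))
      = φ x * (negLap φ x + W x * φ x) + φ x * (negLap ψ x + W x * ψ x)
        + ψ x * (negLap φ x + W x * φ x) + ψ x * (negLap ψ x + W x * ψ x) := by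
    intro x; rw [negLap_add]; ring
  simp_rw [key]
  rw [Finset.sum_add_distrib, Finset.sum_add_distrib, Finset.sum_add_distrib]
  have hBsymm : ∑ x ∈ clos S, ψ x * (negLap φ x + W x * φ x)
      = ∑ x ∈ clos S, φ x * (negLap ψ x + W x * ψ x) := by
    rw [← BL_eq_sum W ψ φ (hψ.trans (clos_coe_subset (S := S))),
      ← BL_eq_sum W φ ψ (hφ.trans (clos_coe_subset (S := S))), BL_symm W ψ φ S hψ hφ]
  rw [hBsymm]; ring

lemma energy_smul (W φ : Zd d → ℝ) (c : ℝ) (S : Finset (Zd d)) (hφ : support φ ⊆ ↑S) :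
    energy W (fun x => c * φ x) = c ^ 2 * energy W φ := by
  have h : support (fun x => c * φ x) ⊆ ↑S :=
    (supp_mul_left' (c := c) φ).trans hφ
  rw [energy_eq_sum _ _ h, energy_eq_sum W φ hφ, Finset.mul_sum]
  refine Finset.sum_congr rfl fun x _ => ?_
  rw [negLap_smul]; ring

lemma norm2_smul (φ : Zd d → ℝ) (c : ℝ) (S : Finset (Zd d)) (hφ : support φ ⊆ ↑S) :
    norm2 (fun x => c * φ x) = c ^ 2 * norm2 φ := by
  have h : support (fun x => c * φ x) ⊆ ↑S := (supp_mul_left' (c := c) φ).trans hφ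
  rw [norm2_eq_sum _ h, norm2_eq_sum φ hφ, Finset.mul_sum]
  exact Finset.sum_congr rfl fun x _ => by ring

lemma norm2_add (φ ψ : Zd d → ℝ) (S : Finset (Zd d)) (hφ : support φ ⊆ ↑S)
    (hψ : support ψ ⊆ ↑S) :
    norm2 (fun x => φ x + ψ x) = norm2 φ + 2 * ∑ x ∈ S, φ x * ψ x + norm2 ψ := by
  have hsum : support (fun x => φ x + ψ x) ⊆ ↑S :=
    (supp_add φ ψ).trans (Set.union_subset hφ hψ)
  rw [norm2_eq_sum _ hsum, norm2_eq_sum φ hφ, norm2_eq_sum ψ hψ]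
  have key : ∀ x : Zd d, (φ x + ψ x) ^ 2 = φ x ^ 2 + 2 * (φ x * ψ x) + ψ x ^ 2 :=
    fun x => by ring
  simp_rw [key]
  rw [Finset.sum_add_distrib, Finset.sum_add_distrib, Finset.mul_sum]

def dlt (x₀ : Zd d) : Zd d → ℝ := fun y => if y = x₀ then 1 else 0

lemma supp_dlt (x₀ : Zd d) : support (dlt x₀) ⊆ ↑({x₀} : Finset (Zd d)) := by
  intro x hx
  simp only [dlt, mem_support, ne_eq, ite_eq_right_iff, Classical.not_imp] at hx
  simp [hx.1]

lemma BL_dlt (W ψ : Zd d → ℝ) (x₀ : Zd d) :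
    BL W (dlt x₀) ψ = negLap ψ x₀ + W x₀ * ψ x₀ := by
  rw [BL_eq_sum W _ ψ (supp_dlt x₀), Finset.sum_singleton]
  simp [dlt]
variable {d : ℕ}
open Function Finset

def EbxF (W : Zd d → ℝ) (Λ : Finset (Zd d)) : ℝ :=
  sInf {r | ∃ φ : Zd d → ℝ, support φ ⊆ ↑Λ ∧ norm2 φ = 1 ∧ r = energy W φ}

def ext (Λ : Finset (Zd d)) (u : EuclideanSpace ℝ ↥Λ) : Zd d → ℝ :=
  fun x => if h : x ∈ Λ then u ⟨x, h⟩ else 0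

lemma supp_ext (Λ : Finset (Zd d)) (u : EuclideanSpace ℝ ↥Λ) : support (ext Λ u) ⊆ ↑Λ := by
  intro x hx
  simp only [mem_support, ext] at hx
  by_contra h
  exact hx (dif_neg (fun hc => h (Finset.mem_coe.2 hc)))

lemma sum_coe (Λ : Finset (Zd d)) (f : Zd d → ℝ) : ∑ a : ↥Λ, f ↑a = ∑ x ∈ Λ, f x :=
  Finset.sum_coe_sort Λ f

lemma norm2_ext (Λ : Finset (Zd d)) (u : EuclideanSpace ℝ ↥Λ) :
    norm2 (ext Λ u) = ‖u‖ ^ 2 := by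
  rw [norm2_eq_sum _ (supp_ext Λ u), EuclideanSpace.norm_eq, Real.sq_sqrt (by positivity)]
  rw [← sum_coe Λ (fun x => ext Λ u x ^ 2)]
  refine Finset.sum_congr rfl fun a _ => ?_
  rw [Real.norm_eq_abs, sq_abs, ext, dif_pos a.2]

lemma cont_ext_apply (Λ : Finset (Zd d)) (x : Zd d) :
    Continuous fun u : EuclideanSpace ℝ ↥Λ => ext Λ u x := by
  by_cases h : x ∈ Λ
  · simp only [ext, dif_pos h]
    exact PiLp.continuous_apply (p := 2) (β := fun _ : ↥Λ => ℝ) (⟨x, h⟩ : ↥Λ)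
  · simp only [ext, dif_neg h]
    exact continuous_const

lemma cont_energy (W : Zd d → ℝ) (Λ : Finset (Zd d)) :
    Continuous fun u : EuclideanSpace ℝ ↥Λ => energy W (ext Λ u) := by
  have key : (fun u : EuclideanSpace ℝ ↥Λ => energy W (ext Λ u))
      = fun u => ∑ x ∈ Λ, ext Λ u x * (negLap (ext Λ u) x + W x * ext Λ u x) :=
    funext fun u => energy_eq_sum W _ (supp_ext Λ u)
  rw [key]
  refine continuous_finset_sum _ fun x _ => ?_
  have hneg : Continuous fun u : EuclideanSpace ℝ ↥Λ => negLap (ext Λ u) x := by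
    unfold negLap
    refine continuous_finset_sum _ fun i _ => ?_
    exact (((cont_ext_apply Λ x).sub (cont_ext_apply Λ (x + unitVec i))).add
      ((cont_ext_apply Λ x).sub (cont_ext_apply Λ (x - unitVec i))))
  exact (cont_ext_apply Λ x).mul (hneg.add (continuous_const.mul (cont_ext_apply Λ x)))

lemma quad_coeff_zero {a b : ℝ} (h : ∀ ε : ℝ, 0 ≤ a * ε ^ 2 + b * ε) : b = 0 := by
  by_contra hb
  have hb' : 0 < |b| := abs_pos.2 hb
  set ε₀ := |b| / (2 * (|a| + 1)) with hε₀def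
  have hε₀ : 0 < ε₀ := by positivity
  have k1 : -b ≤ a * ε₀ := by have := h ε₀; nlinarith
  have k2 : b ≤ a * ε₀ := by have := h (-ε₀); nlinarith
  have h3 : a * ε₀ ≤ |a| * ε₀ := mul_le_mul_of_nonneg_right (le_abs_self a) hε₀.le
  have habs : |b| ≤ |a| * ε₀ := by rcases abs_cases b with ⟨hh, _⟩ | ⟨hh, _⟩ <;> linarith
  rw [hε₀def] at habs
  have h4 : |a| < 2 * (|a| + 1) := by linarith [abs_nonneg a]
  have hlt : |a| * (|b| / (2 * (|a| + 1))) < |b| := by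
    calc |a| * (|b| / (2 * (|a| + 1))) = |a| / (2 * (|a| + 1)) * |b| := by ring
      _ < 1 * |b| := by
          refine mul_lt_mul_of_pos_right ?_ hb'
          rw [div_lt_one (by positivity)]; exact h4
      _ = |b| := one_mul _
  exact absurd habs (not_le.2 hlt)

lemma norm2_dlt (x₀ : Zd d) : norm2 (dlt x₀) = 1 := by
  rw [norm2_eq_sum _ (supp_dlt x₀), Finset.sum_singleton]
  simp [dlt]

lemma BL_smul_right (W φ ψ : Zd d → ℝ) (c : ℝ) {B : Finset (Zd d)} (hφ : support φ ⊆ ↑B) :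
    BL W φ (fun y => c * ψ y) = c * BL W φ ψ := by
  rw [BL_eq_sum W φ _ hφ, BL_eq_sum W φ ψ hφ, Finset.mul_sum]
  refine Finset.sum_congr rfl fun x _ => ?_
  rw [negLap_smul]; ring
variable {d : ℕ}
open Function Finset

lemma zero_of_norm2_zero (φ : Zd d → ℝ) {Λ : Finset (Zd d)} (hs : support φ ⊆ ↑Λ)
    (h0 : norm2 φ = 0) : ∀ x, φ x = 0 := by
  intro x
  by_cases hx : x ∈ Λ
  · have hsum := norm2_eq_sum φ hs
    rw [h0] at hsum
    have hz := (Finset.sum_eq_zero_iff_of_nonneg (fun y _ => sq_nonneg (φ y))).1 hsum.symm x hx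
    exact pow_eq_zero_iff (two_ne_zero) |>.1 hz
  · by_contra h; exact hx (Finset.mem_coe.1 (hs h))

lemma energy_zero_of (W φ : Zd d → ℝ) (Λ : Finset (Zd d)) (hs : support φ ⊆ ↑Λ)
    (hz : ∀ x, φ x = 0) : energy W φ = 0 := by
  rw [energy_eq_sum W φ hs]
  exact Finset.sum_eq_zero fun x _ => by rw [hz]; ring

lemma min_scale (W : Zd d → ℝ) (Λ : Finset (Zd d)) (E : ℝ)
    (hlow : ∀ φ : Zd d → ℝ, support φ ⊆ ↑Λ → norm2 φ = 1 → E ≤ energy W φ) :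
    ∀ φ : Zd d → ℝ, support φ ⊆ ↑Λ → E * norm2 φ ≤ energy W φ := by
  intro φ hs
  rcases eq_or_lt_of_le (norm2_nonneg φ) with h0 | hpos
  · rw [← h0, mul_zero, energy_zero_of W φ Λ hs (zero_of_norm2_zero φ hs h0.symm)]
  · set n := norm2 φ with hn
    set c : ℝ := (Real.sqrt n)⁻¹ with hc
    have hsn : (0:ℝ) < Real.sqrt n := Real.sqrt_pos.2 hpos
    have hc2 : c ^ 2 = n⁻¹ := by rw [hc, inv_pow, Real.sq_sqrt hpos.le]
    have hsupp' : support (fun x => c * φ x) ⊆ ↑Λ := (supp_mul_left' φ).trans hs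
    have hn' : norm2 (fun x => c * φ x) = 1 := by
      rw [norm2_smul φ c Λ hs, hc2, ← hn, inv_mul_cancel₀ hpos.ne']
    have hkey := hlow _ hsupp' hn'
    rw [energy_smul W φ c Λ hs, hc2] at hkey
    calc E * n ≤ n⁻¹ * energy W φ * n := mul_le_mul_of_nonneg_right hkey hpos.le
      _ = energy W φ := by field_simp

lemma exists_gs (W : Zd d → ℝ) (Λ : Finset (Zd d)) (hΛ : Λ.Nonempty) :
    ∃ ψ : Zd d → ℝ, support ψ ⊆ ↑Λ ∧ (∀ x, 0 ≤ ψ x) ∧ norm2 ψ = 1 ∧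
      energy W ψ = EbxF W Λ ∧
      (∀ φ : Zd d → ℝ, support φ ⊆ ↑Λ → EbxF W Λ * norm2 φ ≤ energy W φ) ∧
      (∀ x ∈ Λ, negLap ψ x + W x * ψ x = EbxF W Λ * ψ x) := by
  classical
  obtain ⟨a0, ha0⟩ := hΛ
  set f : EuclideanSpace ℝ ↥Λ → ℝ := fun u => energy W (ext Λ u) with hf
  have hsing : ‖(EuclideanSpace.single (⟨a0, ha0⟩ : ↥Λ) (1:ℝ))‖ = 1 := by
    rw [EuclideanSpace.norm_single]; norm_num
  obtain ⟨u₀, hu₀, hmin⟩ := (isCompact_sphere (0 : EuclideanSpace ℝ ↥Λ) 1).exists_isMinOn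
      ⟨_, mem_sphere_zero_iff_norm.2 hsing⟩ (cont_energy W Λ).continuousOn
  have hu₀n : ‖u₀‖ = 1 := mem_sphere_zero_iff_norm.1 hu₀
  set ψ₁ := ext Λ u₀ with hψ₁
  have hs₁ : support ψ₁ ⊆ ↑Λ := supp_ext Λ u₀
  have hn₁ : norm2 ψ₁ = 1 := by rw [hψ₁, norm2_ext, hu₀n, one_pow]
  have hlow : ∀ φ : Zd d → ℝ, support φ ⊆ ↑Λ → norm2 φ = 1 → energy W ψ₁ ≤ energy W φ := by
    intro φ hsφ hnφ
    set u : EuclideanSpace ℝ ↥Λ := WithLp.toLp 2 (fun a => φ ↑a) with hu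
    have hext : ext Λ u = φ := by
      funext x
      by_cases h : x ∈ Λ
      · simp [ext, dif_pos h, hu]
      · simp only [ext, dif_neg h]
        by_contra hne
        exact h (Finset.mem_coe.1 (hsφ fun hc => hne hc.symm))
    have hun : u ∈ Metric.sphere (0 : EuclideanSpace ℝ ↥Λ) 1 := by
      rw [mem_sphere_zero_iff_norm, EuclideanSpace.norm_eq]
      have hsum : ∑ a : ↥Λ, ‖u a‖ ^ 2 = norm2 φ := by
        rw [norm2_eq_sum φ hsφ, ← sum_coe Λ (fun x => φ x ^ 2)]
        exact Finset.sum_congr rfl fun a _ => by rw [Real.norm_eq_abs, sq_abs]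
      rw [hsum, hnφ, Real.sqrt_one]
    have := isMinOn_iff.1 hmin u hun
    simpa [hf, hext] using this
  have hlb : ∀ r ∈ {r | ∃ φ : Zd d → ℝ, support φ ⊆ ↑Λ ∧ norm2 φ = 1 ∧ r = energy W φ},
      energy W ψ₁ ≤ r := by
    rintro r ⟨φ, h1, h2, rfl⟩; exact hlow φ h1 h2
  have hmem : energy W ψ₁ ∈
      {r | ∃ φ : Zd d → ℝ, support φ ⊆ ↑Λ ∧ norm2 φ = 1 ∧ r = energy W φ} := ⟨ψ₁, hs₁, hn₁, rfl⟩
  have hEeq : EbxF W Λ = energy W ψ₁ :=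
    le_antisymm (csInf_le ⟨_, hlb⟩ hmem) (le_csInf ⟨_, hmem⟩ hlb)
  set ψ : Zd d → ℝ := fun x => |ψ₁ x| with hψdef
  have hsψ : support ψ ⊆ ↑Λ := by
    rw [hψdef, support_abs ψ₁]; exact hs₁
  have hnψ : norm2 ψ = 1 := by rw [hψdef, norm2_abs]; exact hn₁
  have hEψ : energy W ψ = EbxF W Λ := by
    rw [hEeq]
    exact le_antisymm (energy_abs_le W ψ₁ Λ hs₁) (hlow ψ hsψ hnψ)
  have hminall : ∀ φ : Zd d → ℝ, support φ ⊆ ↑Λ → EbxF W Λ * norm2 φ ≤ energy W φ :=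
    min_scale W Λ _ (fun φ h1 h2 => by rw [hEeq]; exact hlow φ h1 h2)
  refine ⟨ψ, hsψ, fun x => abs_nonneg _, hnψ, hEψ, hminall, ?_⟩
  intro x hx
  set E := EbxF W Λ with hE
  have hδ : support (dlt x) ⊆ ↑Λ := by
    refine (supp_dlt x).trans ?_
    intro y hy
    simp only [Finset.coe_singleton, Set.mem_singleton_iff] at hy
    subst hy; exact Finset.mem_coe.2 hx
  set aa := energy W (dlt x) - E with haa
  set bb := 2 * (BL W ψ (dlt x) - E * ψ x) with hbb
  have hq : ∀ ε : ℝ, 0 ≤ aa * ε ^ 2 + bb * ε := by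
    intro ε
    have hsεδ : support (fun y => ε * dlt x y) ⊆ ↑Λ := (supp_mul_left' _).trans hδ
    have hφs : support (fun y => ψ y + ε * dlt x y) ⊆ ↑Λ :=
      (supp_add _ _).trans (Set.union_subset hsψ hsεδ)
    have hmin' := hminall _ hφs
    rw [energy_add W ψ (fun y => ε * dlt x y) Λ hsψ hsεδ,
      norm2_add ψ (fun y => ε * dlt x y) Λ hsψ hsεδ,
      BL_smul_right W ψ (dlt x) ε hsψ,
      energy_smul W (dlt x) ε Λ hδ, hEψ, hnψ] at hmin'
    have hcross : ∑ y ∈ Λ, ψ y * (ε * dlt x y) = ε * ψ x := by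
      rw [Finset.sum_eq_single x]
      · simp [dlt]; ring
      · intro y _ hne; simp [dlt, hne]
      · intro hxx; exact absurd hx hxx
    have hn2 : norm2 (fun y => ε * dlt x y) = ε ^ 2 := by
      rw [norm2_smul (dlt x) ε Λ hδ, norm2_dlt, mul_one]
    rw [hcross, hn2] at hmin'
    rw [haa, hbb]
    nlinarith [hmin']
  have hb0 := quad_coeff_zero hq
  have hBL : BL W ψ (dlt x) = E * ψ x := by
    rw [hbb] at hb0; linarith
  have hBL2 : BL W (dlt x) ψ = E * ψ x := by
    rw [← BL_symm W ψ (dlt x) Λ hsψ hδ]; exact hBL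
  rw [BL_dlt W ψ x] at hBL2
  exact hBL2
variable {d : ℕ}
open Function Finset

lemma dist1_eq_zero {y γ : Zd d} (h : dist1 y γ = 0) : y = γ := by
  funext j
  have := (Finset.sum_eq_zero_iff.1 h) j (Finset.mem_univ j)
  omega

/-- index of first coordinate where `y` differs from `γ` (junk if none). -/
def fidx (hd : 0 < d) (γ y : Zd d) : Fin d :=
  if h : (Finset.univ.filter fun i => y i ≠ γ i).Nonempty
    then (Finset.univ.filter fun i => y i ≠ γ i).min' h else ⟨0, hd⟩

/-- one step from `y` toward `γ`, with the data to reconstruct `y`. -/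
def stp (hd : 0 < d) (γ y : Zd d) : Zd d × Fin d × Bool :=
  let i := fidx hd γ y
  if γ i < y i then (y - unitVec i, i, true) else (y + unitVec i, i, false)

def tgt (p : Zd d × Fin d × Bool) : Zd d :=
  if p.2.2 then p.1 + unitVec p.2.1 else p.1 - unitVec p.2.1

lemma fidx_spec (hd : 0 < d) {γ y : Zd d} (hne : y ≠ γ) : y (fidx hd γ y) ≠ γ (fidx hd γ y) := by
  have hex : (Finset.univ.filter fun i => y i ≠ γ i).Nonempty := by
    obtain ⟨i, hi⟩ := Function.ne_iff.1 hne
    exact ⟨i, Finset.mem_filter.2 ⟨Finset.mem_univ _, hi⟩⟩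
  rw [fidx, dif_pos hex]
  exact (Finset.mem_filter.1 ((Finset.univ.filter fun i => y i ≠ γ i).min'_mem hex)).2

lemma tgt_stp (hd : 0 < d) {γ y : Zd d} : tgt (stp hd γ y) = y := by
  rw [stp, tgt]
  by_cases h : γ (fidx hd γ y) < y (fidx hd γ y)
  · simp only [if_pos h]; funext j; simp [sub_add_cancel]
  · simp only [if_neg h]; funext j; simp [add_sub_cancel_right]

lemma stp_coord (hd : 0 < d) {γ y : Zd d} (hne : y ≠ γ) (j : Fin d) :
    ((stp hd γ y).1 j = y j ∧ j ≠ fidx hd γ y) ∨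
    (j = fidx hd γ y ∧
      ((γ j < y j ∧ (stp hd γ y).1 j = y j - 1) ∨ (y j < γ j ∧ (stp hd γ y).1 j = y j + 1))) := by
  have hfs := fidx_spec hd hne
  set i := fidx hd γ y with hi
  by_cases hj : j = i
  · subst hj
    right
    refine ⟨rfl, ?_⟩
    rcases lt_or_gt_of_ne (fun h => hfs h) with h | h
    · right
      refine ⟨h, ?_⟩
      rw [stp, ← hi, if_neg (not_lt.2 h.le)]
      simp [unitVec]
    · left
      refine ⟨h, ?_⟩
      rw [stp, ← hi, if_pos h]
      simp [unitVec]
  · left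
    refine ⟨?_, hj⟩
    rw [stp, ← hi]
    by_cases h : γ i < y i <;> simp [h, unitVec, hj]

lemma dist1_stp (hd : 0 < d) {γ y : Zd d} (hne : y ≠ γ) :
    dist1 ((stp hd γ y).1) γ + 1 = dist1 y γ := by
  set i := fidx hd γ y with hi
  rw [dist1, dist1, ← Finset.sum_erase_add _ _ (Finset.mem_univ i),
    ← Finset.sum_erase_add _ _ (Finset.mem_univ i)]
  have hsame : ∀ j ∈ Finset.univ.erase i,
      (((stp hd γ y).1 j - γ j).natAbs) = ((y j - γ j).natAbs) := by
    intro j hj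
    have hjne := (Finset.mem_erase.1 hj).1
    rcases stp_coord hd hne j with ⟨h1, _⟩ | ⟨h2, _⟩
    · rw [h1]
    · exact absurd h2 hjne
  rw [Finset.sum_congr rfl hsame]
  have hii : _ := stp_coord hd hne i
  rcases hii with ⟨_, hni⟩ | ⟨_, hcase⟩
  · exact absurd rfl hni
  · rcases hcase with ⟨hlt, heq⟩ | ⟨hlt, heq⟩ <;> rw [heq] <;> omega

section LevelBox

variable (lo hi : Fin d → ℤ) (γ : Zd d) (ψ : Zd d → ℝ) (β : ℝ)

def boxC (lo hi : Fin d → ℤ) : Finset (Zd d) :=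
  Fintype.piFinset fun i => Finset.Icc (lo i) (hi i)

lemma mem_boxC {lo hi : Fin d → ℤ} {x : Zd d} :
    x ∈ boxC lo hi ↔ ∀ i, lo i ≤ x i ∧ x i ≤ hi i := by
  simp [boxC, Fintype.mem_piFinset, Finset.mem_Icc]

lemma stp_mem_boxC (hd : 0 < d) {lo hi : Fin d → ℤ} {y : Zd d} (hne : y ≠ γ)
    (hy : y ∈ boxC lo hi) (hγ : γ ∈ boxC lo hi) : (stp hd γ y).1 ∈ boxC lo hi := by
  rw [mem_boxC] at *
  intro j
  rcases stp_coord hd hne j with ⟨h1, _⟩ | ⟨_, hcase⟩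
  · rw [h1]; exact hy j
  · rcases hcase with ⟨hlt, heq⟩ | ⟨hlt, heq⟩ <;>
      (rw [heq]; have := hy j; have := hγ j; constructor <;> omega)

lemma level_step (hd : 0 < d) (hψ0 : ∀ x, 0 ≤ ψ x) (hγ : γ ∈ boxC lo hi)
    (hnb : ∀ x ∈ boxC lo hi, ∑ i, (ψ (x + unitVec i) + ψ (x - unitVec i)) ≤ β * ψ x)
    (n : ℕ) :
    ∑ y ∈ (boxC lo hi).filter (fun y => dist1 y γ = n + 1), ψ y
      ≤ β * ∑ x ∈ (boxC lo hi).filter (fun x => dist1 x γ = n), ψ x := by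
  classical
  set C := boxC lo hi
  set L1 := C.filter (fun y => dist1 y γ = n + 1) with hL1
  set L0 := C.filter (fun x => dist1 x γ = n) with hL0
  have hne_of : ∀ y ∈ L1, y ≠ γ := by
    intro y hy hc
    have := (Finset.mem_filter.1 hy).2
    subst hc
    rw [dist1] at this
    simp at this
  have hinj : ∀ y₁ ∈ L1, ∀ y₂ ∈ L1, stp hd γ y₁ = stp hd γ y₂ → y₁ = y₂ := by
    intro y₁ _ y₂ _ h
    have := congrArg tgt h
    rwa [tgt_stp, tgt_stp] at this
  have h1 : ∑ y ∈ L1, ψ y = ∑ p ∈ L1.image (stp hd γ), ψ (tgt p) := by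
    rw [Finset.sum_image hinj]
    exact (Finset.sum_congr rfl fun y _ => by rw [tgt_stp]).symm
  have himg : L1.image (stp hd γ) ⊆ L0 ×ˢ (Finset.univ : Finset (Fin d × Bool)) := by
    intro p hp
    obtain ⟨y, hy, rfl⟩ := Finset.mem_image.1 hp
    have hyne := hne_of y hy
    have hyC := (Finset.mem_filter.1 hy).1
    have hyd := (Finset.mem_filter.1 hy).2
    refine Finset.mem_product.2 ⟨Finset.mem_filter.2 ⟨stp_mem_boxC γ hd hyne hyC hγ, ?_⟩,
      Finset.mem_univ _⟩
    have := dist1_stp hd hyne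
    omega
  calc ∑ y ∈ L1, ψ y = ∑ p ∈ L1.image (stp hd γ), ψ (tgt p) := h1
    _ ≤ ∑ p ∈ L0 ×ˢ (Finset.univ : Finset (Fin d × Bool)), ψ (tgt p) :=
        Finset.sum_le_sum_of_subset_of_nonneg himg (fun p _ _ => hψ0 _)
    _ = ∑ x ∈ L0, ∑ q : Fin d × Bool, ψ (tgt (x, q)) := Finset.sum_product _ _ _
    _ ≤ ∑ x ∈ L0, β * ψ x := by
        refine Finset.sum_le_sum fun x hx => ?_
        have hxC : x ∈ C := (Finset.mem_filter.1 hx).1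
        have : ∑ q : Fin d × Bool, ψ (tgt (x, q))
            = ∑ i, (ψ (x + unitVec i) + ψ (x - unitVec i)) := by
          rw [Fintype.sum_prod_type]
          refine Finset.sum_congr rfl fun i _ => ?_
          rw [Fintype.sum_bool]
          rfl
        rw [this]
        exact hnb x hxC
    _ = β * ∑ x ∈ L0, ψ x := by rw [Finset.mul_sum]

lemma level_pow (hd : 0 < d) (hψ0 : ∀ x, 0 ≤ ψ x) (hγ : γ ∈ boxC lo hi) (hβ : 1 ≤ β)
    (hnb : ∀ x ∈ boxC lo hi, ∑ i, (ψ (x + unitVec i) + ψ (x - unitVec i)) ≤ β * ψ x) :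
    ∀ n : ℕ, ∑ x ∈ (boxC lo hi).filter (fun x => dist1 x γ = n), ψ x ≤ β ^ n * ψ γ := by
  intro n
  induction n with
  | zero =>
    have hsub : (boxC lo hi).filter (fun x => dist1 x γ = 0) ⊆ {γ} := by
      intro x hx
      rw [Finset.mem_singleton]
      exact dist1_eq_zero (Finset.mem_filter.1 hx).2
    calc ∑ x ∈ (boxC lo hi).filter (fun x => dist1 x γ = 0), ψ x
        ≤ ∑ x ∈ ({γ} : Finset (Zd d)), ψ x :=
          Finset.sum_le_sum_of_subset_of_nonneg hsub (fun x _ _ => hψ0 x)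
      _ = ψ γ := Finset.sum_singleton _ _
      _ = β ^ 0 * ψ γ := by rw [pow_zero, one_mul]
  | succ n ih =>
    calc ∑ x ∈ (boxC lo hi).filter (fun x => dist1 x γ = n + 1), ψ x
        ≤ β * ∑ x ∈ (boxC lo hi).filter (fun x => dist1 x γ = n), ψ x :=
          level_step lo hi γ ψ β hd hψ0 hγ hnb n
      _ ≤ β * (β ^ n * ψ γ) := mul_le_mul_of_nonneg_left ih (le_trans zero_le_one hβ)
      _ = β ^ (n + 1) * ψ γ := by ring

end LevelBox
variable {d : ℕ}
open Function Finset

section CellBound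

variable (lo hi : Fin d → ℤ) (γ : Zd d) (ψ : Zd d → ℝ) (β : ℝ) (m : ℕ)

lemma dist1_le_m {lo hi : Fin d → ℤ} {γ x : Zd d} (hγ : γ ∈ boxC lo hi) (hx : x ∈ boxC lo hi) :
    dist1 x γ ≤ ∑ i, (hi i - lo i).toNat := by
  rw [dist1]
  refine Finset.sum_le_sum fun i _ => ?_
  have h1 := (mem_boxC.1 hγ) i
  have h2 := (mem_boxC.1 hx) i
  omega

lemma sum_all (hd : 0 < d) (hψ0 : ∀ x, 0 ≤ ψ x) (hγ : γ ∈ boxC lo hi) (hβ : 1 ≤ β)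
    (hnb : ∀ x ∈ boxC lo hi, ∑ i, (ψ (x + unitVec i) + ψ (x - unitVec i)) ≤ β * ψ x)
    (hm : m = ∑ i, (hi i - lo i).toNat) :
    ∑ x ∈ boxC lo hi, ψ x ≤ (∑ n ∈ Finset.range (m + 1), β ^ n) * ψ γ := by
  have hmap : ∀ x ∈ boxC lo hi, dist1 x γ ∈ Finset.range (m + 1) := by
    intro x hx
    rw [Finset.mem_range, Nat.lt_succ_iff, hm]
    exact dist1_le_m hγ hx
  rw [← Finset.sum_fiberwise_of_maps_to hmap ψ]
  rw [Finset.sum_mul]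
  exact Finset.sum_le_sum fun n _ => level_pow lo hi γ ψ β hd hψ0 hγ hβ hnb n

lemma max_bound (hd : 0 < d) (hψ0 : ∀ x, 0 ≤ ψ x) (hγ : γ ∈ boxC lo hi) (hβ : 1 ≤ β)
    (hnb : ∀ x ∈ boxC lo hi, ∑ i, (ψ (x + unitVec i) + ψ (x - unitVec i)) ≤ β * ψ x)
    (hm : m = ∑ i, (hi i - lo i).toNat) :
    ∀ x ∈ boxC lo hi, ψ x ≤ β ^ m * ψ γ := by
  intro x hx
  have h1 : ψ x ≤ ∑ y ∈ (boxC lo hi).filter (fun y => dist1 y γ = dist1 x γ), ψ y :=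
    Finset.single_le_sum (fun y _ => hψ0 y)
      (Finset.mem_filter.2 ⟨hx, rfl⟩)
  have h2 := level_pow lo hi γ ψ β hd hψ0 hγ hβ hnb (dist1 x γ)
  have h3 : β ^ (dist1 x γ) * ψ γ ≤ β ^ m * ψ γ := by
    refine mul_le_mul_of_nonneg_right ?_ (hψ0 γ)
    exact pow_le_pow_right₀ hβ (by rw [hm]; exact dist1_le_m hγ hx)
  linarith

lemma cell_sq_bound (hd : 0 < d) (hψ0 : ∀ x, 0 ≤ ψ x) (hγ : γ ∈ boxC lo hi) (hβ : 1 ≤ β)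
    (hnb : ∀ x ∈ boxC lo hi, ∑ i, (ψ (x + unitVec i) + ψ (x - unitVec i)) ≤ β * ψ x)
    (hm : m = ∑ i, (hi i - lo i).toNat) :
    (β - 1) * ∑ x ∈ boxC lo hi, ψ x ^ 2 ≤ β ^ (2 * m + 1) * ψ γ ^ 2 := by
  have hβ0 : (0:ℝ) ≤ β := le_trans zero_le_one hβ
  have hA : (0:ℝ) ≤ β ^ m := pow_nonneg hβ0 m
  have hg : 0 ≤ ψ γ := hψ0 γ
  set P2 := ∑ x ∈ boxC lo hi, ψ x ^ 2 with hP2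
  set P1 := ∑ x ∈ boxC lo hi, ψ x with hP1
  set G := ∑ n ∈ Finset.range (m + 1), β ^ n with hG
  have h1 : P2 ≤ β ^ m * ψ γ * P1 := by
    rw [hP2, hP1, Finset.mul_sum]
    refine Finset.sum_le_sum fun x hx => ?_
    rw [sq]
    exact mul_le_mul_of_nonneg_right (max_bound lo hi γ ψ β m hd hψ0 hγ hβ hnb hm x hx) (hψ0 x)
  have h2 : P1 ≤ G * ψ γ := sum_all lo hi γ ψ β m hd hψ0 hγ hβ hnb hm
  have h3 : G * (β - 1) = β ^ (m + 1) - 1 := geom_sum_mul β (m + 1)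
  have hP1n : 0 ≤ P1 := Finset.sum_nonneg fun x _ => hψ0 x
  have hGn : 0 ≤ G := Finset.sum_nonneg fun n _ => pow_nonneg hβ0 n
  have step1 : (β - 1) * P2 ≤ (β - 1) * (β ^ m * ψ γ * P1) :=
    mul_le_mul_of_nonneg_left h1 (by linarith)
  have step2 : (β - 1) * (β ^ m * ψ γ * P1) ≤ (β - 1) * (β ^ m * ψ γ * (G * ψ γ)) := by
    refine mul_le_mul_of_nonneg_left ?_ (by linarith)
    exact mul_le_mul_of_nonneg_left h2 (mul_nonneg hA hg)
  have step3 : (β - 1) * (β ^ m * ψ γ * (G * ψ γ)) = β ^ m * ψ γ ^ 2 * (G * (β - 1)) := by ring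
  have step4 : β ^ m * ψ γ ^ 2 * (β ^ (m + 1) - 1) ≤ β ^ m * ψ γ ^ 2 * β ^ (m + 1) := by
    refine mul_le_mul_of_nonneg_left ?_ (mul_nonneg hA (sq_nonneg _))
    linarith
  have step5 : β ^ m * ψ γ ^ 2 * β ^ (m + 1) = β ^ (2 * m + 1) * ψ γ ^ 2 := by
    rw [show 2 * m + 1 = m + (m + 1) by omega, pow_add]; ring
  calc (β - 1) * P2 ≤ (β - 1) * (β ^ m * ψ γ * P1) := step1
    _ ≤ (β - 1) * (β ^ m * ψ γ * (G * ψ γ)) := step2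
    _ = β ^ m * ψ γ ^ 2 * (G * (β - 1)) := step3
    _ = β ^ m * ψ γ ^ 2 * (β ^ (m + 1) - 1) := by rw [h3]
    _ ≤ β ^ m * ψ γ ^ 2 * β ^ (m + 1) := step4
    _ = β ^ (2 * m + 1) * ψ γ ^ 2 := step5

end CellBound

lemma nbr_of_eig (W ψ : Zd d → ℝ) (E β : ℝ) (x : Zd d)
    (heq : negLap ψ x + W x * ψ x = E * ψ x)
    (hψ0 : 0 ≤ ψ x) (hWb : 2 * d + W x - E ≤ β) :
    ∑ i, (ψ (x + unitVec i) + ψ (x - unitVec i)) ≤ β * ψ x := by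
  have key : ∀ i : Fin d, (ψ x - ψ (x + unitVec i)) + (ψ x - ψ (x - unitVec i))
      = 2 * ψ x - (ψ (x + unitVec i) + ψ (x - unitVec i)) := fun i => by ring
  have hL : negLap ψ x = 2 * d * ψ x - ∑ i, (ψ (x + unitVec i) + ψ (x - unitVec i)) := by
    rw [negLap]
    simp_rw [key]
    rw [Finset.sum_sub_distrib, Finset.sum_const, Finset.card_univ, Fintype.card_fin,
      nsmul_eq_mul]
    ring
  rw [hL] at heq
  have hfac : ∑ i, (ψ (x + unitVec i) + ψ (x - unitVec i)) = (2 * d + W x - E) * ψ x := by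
    linarith
  rw [hfac]
  exact mul_le_mul_of_nonneg_right hWb hψ0
variable {d : ℕ}
open Function Finset

def cellK (K : ℕ) (z : Zd d) : Finset (Zd d) :=
  boxC (fun i => (K:ℤ) * z i - (K/2 : ℕ)) (fun i => (K:ℤ) * z i - (K/2 : ℕ) + K - 1)

lemma mem_cellK {K : ℕ} {z x : Zd d} :
    x ∈ cellK K z ↔ ∀ i, (K:ℤ) * z i - (K/2 : ℕ) ≤ x i ∧ x i ≤ (K:ℤ) * z i - (K/2 : ℕ) + K - 1 :=
  mem_boxC

lemma half_facts (K : ℕ) : 2 * (K / 2) ≤ K ∧ K ≤ 2 * (K / 2) + 1 := by omega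

lemma lam0_subset_cellK {K : ℕ} (hK : 0 < K) (z : Zd d) :
    Lam0 K (fun i => (K:ℤ) * z i) ⊆ ↑(cellK K z) := by
  intro y hy
  rw [Finset.mem_coe, mem_cellK]
  intro i
  have h1 := hy i
  simp only at h1
  have h2 := half_facts K
  omega

lemma cellK_unique {K : ℕ} (hK : 0 < K) {z z' x : Zd d}
    (h1 : x ∈ cellK K z) (h2 : x ∈ cellK K z') : z = z' := by
  funext i
  have a1 := (mem_cellK.1 h1) i
  have a2 := (mem_cellK.1 h2) i
  by_contra hne
  rcases lt_or_gt_of_ne hne with h | h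
  · have hz1 : z i + 1 ≤ z' i := h
    have : (K:ℤ) * (z i + 1) ≤ (K:ℤ) * z' i :=
      mul_le_mul_of_nonneg_left (by exact_mod_cast hz1) (by positivity)
    rw [mul_add, mul_one] at this
    omega
  · have hz1 : z' i + 1 ≤ z i := h
    have : (K:ℤ) * (z' i + 1) ≤ (K:ℤ) * z i :=
      mul_le_mul_of_nonneg_left (by exact_mod_cast hz1) (by positivity)
    rw [mul_add, mul_one] at this
    omega

def zf (K : ℕ) (y : Zd d) : Zd d := fun i => (y i + ((K/2 : ℕ) : ℤ)) / (K : ℤ)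

lemma mem_cellK_zf {K : ℕ} (hK : 0 < K) (y : Zd d) : y ∈ cellK K (zf K y) := by
  rw [mem_cellK]
  intro i
  set c : ℤ := y i + ((K/2 : ℕ) : ℤ) with hc
  have hKz : (K:ℤ) ≠ 0 := by exact_mod_cast hK.ne'
  have hKp : (0:ℤ) < (K:ℤ) := by exact_mod_cast hK
  have hnn := Int.emod_nonneg c hKz
  have hlt := Int.emod_lt_of_pos c hKp
  have key : (K:ℤ) * zf K y i + c % (K:ℤ) = c := Int.mul_ediv_add_emod c K
  constructor <;> linarith [hnn, hlt, key]

open scoped Classical in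
lemma card_gamma {K Q : ℕ} (hK : 0 < K) {Γ : Set (Zd d)} (hΓ : RelDense Γ K Q) (z : Zd d) :
    Q ≤ ((cellK K z).filter
      (fun y => y ∈ Γ ∧ y ∈ Lam0 K (fun i => (K:ℤ) * z i))).card := by
  have hsub := lam0_subset_cellK hK z
  have hset : Γ ∩ Lam0 K (fun i => (K:ℤ) * z i)
      = ↑((cellK K z).filter (fun y => y ∈ Γ ∧ y ∈ Lam0 K (fun i => (K:ℤ) * z i))) := by
    ext y
    simp only [Set.mem_inter_iff, Finset.coe_filter, Set.mem_setOf_eq]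
    constructor
    · rintro ⟨h1, h2⟩; exact ⟨Finset.mem_coe.1 (hsub h2), h1, h2⟩
    · rintro ⟨_, h1, h2⟩; exact ⟨h1, h2⟩
  have := hΓ z
  rwa [show (fun i => (K:ℤ) * z i) = fun i => ((K:ℕ):ℤ) * z i from rfl, hset,
    Set.ncard_coe_finset] at this

lemma chi_nonneg (Γ : Set (Zd d)) (x : Zd d) : 0 ≤ chi Γ x := by
  unfold chi
  exact Set.indicator_nonneg (fun _ _ => zero_le_one) x

lemma chi_le_one (Γ : Set (Zd d)) (x : Zd d) : chi Γ x ≤ 1 := by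
  unfold chi
  classical
  rw [Set.indicator_apply]
  split <;> norm_num

lemma chi_of_mem {Γ : Set (Zd d)} {x : Zd d} (h : x ∈ Γ) : chi Γ x = 1 := by
  unfold chi; rw [Set.indicator_of_mem h]
variable {d : ℕ}
open Function Finset

open scoped Classical in
lemma mass_lemma (K Q : ℕ) (hd : 0 < d) (hK : 0 < K) (Γ : Set (Zd d)) (hΓ : RelDense Γ K Q)
    (Z : Finset (Zd d)) (W ψ : Zd d → ℝ) (E β : ℝ)
    (hψ0 : ∀ x, 0 ≤ ψ x) (hsupp : support ψ ⊆ ↑(Z.biUnion (cellK K))) (hnorm : norm2 ψ = 1)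
    (heig : ∀ x ∈ Z.biUnion (cellK K), negLap ψ x + W x * ψ x = E * ψ x)
    (hWb : ∀ x, 2 * d + W x - E ≤ β) (hβ : 1 ≤ β) :
    (Q : ℝ) * (β - 1) ≤ β ^ (2 * (d * (K - 1)) + 1) * ∑ᶠ x, chi Γ x * ψ x ^ 2 := by
  set m := d * (K - 1) with hmdef
  set Λ := Z.biUnion (cellK K) with hΛ
  set T : Zd d → Finset (Zd d) := fun z => (cellK K z).filter
    (fun y => y ∈ Γ ∧ y ∈ Lam0 K (fun i => (K:ℤ) * z i)) with hT
  have hβ0 : (0:ℝ) ≤ β := le_trans zero_le_one hβ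
  -- pairwise disjointness of cells
  have hdisj : (↑Z : Set (Zd d)).PairwiseDisjoint (cellK K) := by
    intro z₁ _ z₂ _ hne
    refine Finset.disjoint_left.2 fun x h1 h2 => hne (cellK_unique hK h1 h2)
  -- per-cell inequality
  have hcell : ∀ z ∈ Z, (Q:ℝ) * ((β - 1) * ∑ x ∈ cellK K z, ψ x ^ 2)
      ≤ β ^ (2 * m + 1) * ∑ y ∈ T z, ψ y ^ 2 := by
    intro z hz
    set lo : Fin d → ℤ := fun i => (K:ℤ) * z i - ((K/2 : ℕ) : ℤ) with hlo
    set hi : Fin d → ℤ := fun i => (K:ℤ) * z i - ((K/2 : ℕ) : ℤ) + K - 1 with hhi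
    have hcb : cellK K z = boxC lo hi := rfl
    have hm : m = ∑ i : Fin d, (hi i - lo i).toNat := by
      have hper : ∀ i : Fin d, (hi i - lo i).toNat = K - 1 := by
        intro i
        have : hi i - lo i = (K:ℤ) - 1 := by rw [hhi, hlo]; ring
        rw [this]; omega
      rw [Finset.sum_congr rfl (fun i _ => hper i), Finset.sum_const, Finset.card_univ,
        Fintype.card_fin, smul_eq_mul, hmdef]
    have hnb : ∀ x ∈ boxC lo hi, ∑ i, (ψ (x + unitVec i) + ψ (x - unitVec i)) ≤ β * ψ x := by
      intro x hx
      have hxΛ : x ∈ Λ := Finset.mem_biUnion.2 ⟨z, hz, by rw [hcb]; exact hx⟩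
      exact nbr_of_eig W ψ E β x (heig x hxΛ) (hψ0 x) (hWb x)
    have hper : ∀ γ ∈ T z, (β - 1) * ∑ x ∈ cellK K z, ψ x ^ 2 ≤ β ^ (2 * m + 1) * ψ γ ^ 2 := by
      intro γ hγT
      have hγc : γ ∈ cellK K z := (Finset.mem_filter.1 hγT).1
      rw [hcb] at hγc ⊢
      exact cell_sq_bound lo hi γ ψ β m hd hψ0 hγc hβ hnb hm
    have hSnn : (0:ℝ) ≤ (β - 1) * ∑ x ∈ cellK K z, ψ x ^ 2 :=
      mul_nonneg (by linarith) (Finset.sum_nonneg fun x _ => sq_nonneg _)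
    have hcard := card_gamma hK hΓ z
    have hstep : ((T z).card : ℝ) * ((β - 1) * ∑ x ∈ cellK K z, ψ x ^ 2)
        ≤ ∑ y ∈ T z, β ^ (2 * m + 1) * ψ y ^ 2 := by
      have := Finset.card_nsmul_le_sum (T z) (fun y => β ^ (2 * m + 1) * ψ y ^ 2)
        ((β - 1) * ∑ x ∈ cellK K z, ψ x ^ 2) (fun y hy => hper y hy)
      rwa [nsmul_eq_mul] at this
    calc (Q:ℝ) * ((β - 1) * ∑ x ∈ cellK K z, ψ x ^ 2)
        ≤ ((T z).card : ℝ) * ((β - 1) * ∑ x ∈ cellK K z, ψ x ^ 2) :=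
          mul_le_mul_of_nonneg_right (by exact_mod_cast hcard) hSnn
      _ ≤ ∑ y ∈ T z, β ^ (2 * m + 1) * ψ y ^ 2 := hstep
      _ = β ^ (2 * m + 1) * ∑ y ∈ T z, ψ y ^ 2 := by rw [Finset.mul_sum]
  -- norm decomposition
  have hnorm' : ∑ z ∈ Z, ∑ x ∈ cellK K z, ψ x ^ 2 = 1 := by
    rw [← Finset.sum_biUnion hdisj, ← norm2_eq_sum ψ hsupp, hnorm]
  -- finsum of chi*ψ²
  have hPsum : ∑ᶠ x, chi Γ x * ψ x ^ 2 = ∑ x ∈ Λ, chi Γ x * ψ x ^ 2 := by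
    refine finsum_eq_sum_of_support_subset _ ?_
    intro x hx
    have : ψ x ≠ 0 := by
      intro h; apply hx; simp [h]
    exact hsupp this
  have hTsub : ∀ z ∈ Z, ∑ y ∈ T z, ψ y ^ 2 ≤ ∑ x ∈ cellK K z, chi Γ x * ψ x ^ 2 := by
    intro z _
    have : ∀ y ∈ T z, ψ y ^ 2 = chi Γ y * ψ y ^ 2 := by
      intro y hy
      rw [chi_of_mem (Finset.mem_filter.1 hy).2.1, one_mul]
    rw [Finset.sum_congr rfl this]
    refine Finset.sum_le_sum_of_subset_of_nonneg (Finset.filter_subset _ _) ?_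
    intro x _ _
    exact mul_nonneg (chi_nonneg Γ x) (sq_nonneg _)
  have hP : ∑ z ∈ Z, ∑ y ∈ T z, ψ y ^ 2 ≤ ∑ᶠ x, chi Γ x * ψ x ^ 2 := by
    rw [hPsum, hΛ, Finset.sum_biUnion hdisj]
    exact Finset.sum_le_sum hTsub
  calc (Q:ℝ) * (β - 1) = ∑ z ∈ Z, (Q:ℝ) * ((β - 1) * ∑ x ∈ cellK K z, ψ x ^ 2) := by
        rw [← Finset.mul_sum, ← Finset.mul_sum, hnorm', mul_one]
    _ ≤ ∑ z ∈ Z, β ^ (2 * m + 1) * ∑ y ∈ T z, ψ y ^ 2 := Finset.sum_le_sum hcell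
    _ = β ^ (2 * m + 1) * ∑ z ∈ Z, ∑ y ∈ T z, ψ y ^ 2 := by rw [Finset.mul_sum]
    _ ≤ β ^ (2 * m + 1) * ∑ᶠ x, chi Γ x * ψ x ^ 2 :=
        mul_le_mul_of_nonneg_left hP (pow_nonneg hβ0 _)

lemma energy_shift_pot (V χf ψ : Zd d → ℝ) (a b : ℝ) (S : Finset (Zd d))
    (hs : support ψ ⊆ ↑S) :
    energy (fun x => V x + a * χf x) ψ
      = energy (fun x => V x + b * χf x) ψ - (b - a) * ∑ x ∈ S, χf x * ψ x ^ 2 := by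
  rw [energy_eq_sum _ _ hs, energy_eq_sum _ _ hs, Finset.mul_sum, ← Finset.sum_sub_distrib]
  exact Finset.sum_congr rfl fun x _ => by ring

lemma EbxF_le_energy (W : Zd d → ℝ) (Λ : Finset (Zd d)) (c₁ : ℝ) (hc₁ : ∀ x, c₁ ≤ W x)
    (ψ : Zd d → ℝ) (hs : support ψ ⊆ ↑Λ) (hn : norm2 ψ = 1) :
    EbxF W Λ ≤ energy W ψ := by
  refine csInf_le ⟨c₁, ?_⟩ ⟨ψ, hs, hn, rfl⟩
  rintro r ⟨φ, h1, h2, rfl⟩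
  have := energy_ge W φ Λ h1 c₁ hc₁
  rw [h2, mul_one] at this
  exact this

lemma bddBelow_range_of_bdd {V : Zd d → ℝ} (hV : BddPot V) : BddBelow (Set.range V) := by
  obtain ⟨C, hC⟩ := hV
  exact ⟨-C, by rintro r ⟨x, rfl⟩; linarith [abs_le.1 (hC x)|>.1]⟩

lemma bddAbove_range_of_bdd {V : Zd d → ℝ} (hV : BddPot V) : BddAbove (Set.range V) := by
  obtain ⟨C, hC⟩ := hV
  exact ⟨C, by rintro r ⟨x, rfl⟩; linarith [abs_le.1 (hC x)|>.2]⟩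

lemma sInf_le_V {V : Zd d → ℝ} (hV : BddPot V) (x : Zd d) : sInf (Set.range V) ≤ V x :=
  csInf_le (bddBelow_range_of_bdd hV) ⟨x, rfl⟩

lemma V_le_sSup {V : Zd d → ℝ} (hV : BddPot V) (x : Zd d) : V x ≤ sSup (Set.range V) :=
  le_csSup (bddAbove_range_of_bdd hV) ⟨x, rfl⟩

lemma spr_nonneg {V : Zd d → ℝ} (hd : 0 < d) (hV : BddPot V) : 0 ≤ spr V := by
  have x0 : Zd d := fun _ => 0
  have h1 := sInf_le_V hV x0
  have h2 := V_le_sSup hV x0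
  rw [spr]; linarith

lemma E0_le_EbxF (V : Zd d → ℝ) (hV : BddPot V) (Λ : Finset (Zd d)) (hΛ : Λ.Nonempty) :
    E0 V ≤ EbxF V Λ := by
  obtain ⟨ψ, hs, _, hn, hE, _, _⟩ := exists_gs V Λ hΛ
  have hfin : (support ψ).Finite := Λ.finite_toSet.subset hs
  refine csInf_le ⟨sInf (Set.range V), ?_⟩ ⟨ψ, hfin, hn, hE.symm⟩
  rintro r ⟨φ, h1, h2, rfl⟩
  have := energy_ge V φ h1.toFinset (by simp) (sInf (Set.range V)) (sInf_le_V hV)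
  rw [h2, mul_one] at this
  exact this
variable {d : ℕ}
open Function Finset

lemma pow_diff_le (x y : ℝ) (hx : 0 ≤ x) (hxy : x ≤ y) :
    ∀ N : ℕ, y ^ (N+1) - x ^ (N+1) ≤ ((N:ℝ)+1) * y ^ N * (y - x) := by
  intro N
  induction N with
  | zero => simp
  | succ N ih =>
    have hxy' : x ^ (N+1) ≤ y ^ (N+1) := pow_le_pow_left₀ hx hxy _
    have hy0 : 0 ≤ y := le_trans hx hxy
    have hN0 : (0:ℝ) ≤ (N:ℝ)+1 := by positivity
    calc y ^ (N+2) - x ^ (N+2) = y * (y ^ (N+1) - x ^ (N+1)) + x ^ (N+1) * (y - x) := by ring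
      _ ≤ y * (((N:ℝ)+1) * y ^ N * (y - x)) + y ^ (N+1) * (y - x) := by
          refine add_le_add (mul_le_mul_of_nonneg_left ih hy0)
            (mul_le_mul_of_nonneg_right hxy' (by linarith))
      _ = ((N:ℝ)+1+1) * y ^ (N+1) * (y - x) := by ring
      _ = (((N+1:ℕ):ℝ)+1) * y ^ (N+1) * (y - x) := by push_cast; ring

lemma inv_pow_diff (N : ℕ) (u v : ℝ) (hu : 0 < u) (huv : u ≤ v) :
    (u ^ (N+1))⁻¹ - (v ^ (N+1))⁻¹ ≤ ((N:ℝ)+1) * (v - u) / u ^ (N+2) := by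
  have hv : 0 < v := lt_of_lt_of_le hu huv
  have hkey := pow_diff_le u v hu.le huv N
  have e1 : (u ^ (N+1))⁻¹ - (v ^ (N+1))⁻¹ = (v ^ (N+1) - u ^ (N+1)) / (u ^ (N+1) * v ^ (N+1)) := by
    field_simp
  rw [e1, div_le_div_iff₀ (by positivity) (by positivity)]
  have hmid : v ^ N * u ^ (N+2) ≤ u ^ (N+1) * v ^ (N+1) := by
    calc v ^ N * u ^ (N+2) = u ^ (N+1) * v ^ N * u := by ring
      _ ≤ u ^ (N+1) * v ^ N * v := mul_le_mul_of_nonneg_left huv (by positivity)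
      _ = u ^ (N+1) * v ^ (N+1) := by ring
  have hc : (0:ℝ) ≤ ((N:ℝ)+1) * (v - u) := mul_nonneg (by positivity) (by linarith)
  calc (v ^ (N+1) - u ^ (N+1)) * u ^ (N+2)
      ≤ (((N:ℝ)+1) * v ^ N * (v - u)) * u ^ (N+2) :=
        mul_le_mul_of_nonneg_right hkey (by positivity)
    _ = (((N:ℝ)+1) * (v - u)) * (v ^ N * u ^ (N+2)) := by ring
    _ ≤ (((N:ℝ)+1) * (v - u)) * (u ^ (N+1) * v ^ (N+1)) := mul_le_mul_of_nonneg_left hmid hc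
    _ = ((N:ℝ)+1) * (v - u) * (u ^ (N+1) * v ^ (N+1)) := by ring
variable {d : ℕ}
open Function Finset

lemma base_step (K Q : ℕ) (hd : 0 < d) (hK : 0 < K)
    (Γ : Set (Zd d)) (hΓ : RelDense Γ K Q) (V : Zd d → ℝ) (hV : BddPot V)
    (Z : Finset (Zd d)) (hΛne : (Z.biUnion (cellK K)).Nonempty)
    (a b : ℝ) (h0a : 0 ≤ a) (hab : a ≤ b) (hba : b ≤ a + 1) :
    (Q : ℝ) / ((2 * d * K - 1 : ℕ) : ℝ) *
        (((2 * (d : ℝ) + 1 + spr V + a) ^ (2 * d * K - 1))⁻¹ -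
          ((2 * (d : ℝ) + 1 + spr V + b) ^ (2 * d * K - 1))⁻¹) ≤
      EbxF (fun x => V x + b * chi Γ x) (Z.biUnion (cellK K))
        - EbxF (fun x => V x + a * chi Γ x) (Z.biUnion (cellK K)) := by
  set Λ := Z.biUnion (cellK K) with hΛdef
  have hspr0 : 0 ≤ spr V := spr_nonneg hd hV
  have hd1 : (1:ℝ) ≤ (d:ℝ) := by exact_mod_cast hd
  set Y : ℝ := 2 * (d:ℝ) + 1 + spr V with hYdef
  set u : ℝ := Y + a with hudef
  set v : ℝ := Y + b with hvdef
  have hY3 : 3 ≤ Y := by rw [hYdef]; linarith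
  have hu3 : 3 ≤ u := by rw [hudef]; linarith
  have huv : u ≤ v := by rw [hudef, hvdef]; linarith
  have hb0 : 0 ≤ b := le_trans h0a hab
  obtain ⟨ψ, hs, hψ0, hn, hE, hminb, heig⟩ := exists_gs (fun x => V x + b * chi Γ x) Λ hΛne
  have hc₁W : ∀ s : ℝ, 0 ≤ s → ∀ x, sInf (Set.range V) ≤ V x + s * chi Γ x := by
    intro s hs0 x
    have h1 := sInf_le_V hV x
    have h2 : 0 ≤ s * chi Γ x := mul_nonneg hs0 (chi_nonneg Γ x)
    linarith
  have hEc₁ : sInf (Set.range V) ≤ EbxF (fun x => V x + b * chi Γ x) Λ := by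
    have := energy_ge _ ψ Λ hs (sInf (Set.range V)) (hc₁W b hb0)
    rw [hn, mul_one, hE] at this
    exact this
  set β : ℝ := 2 * (d:ℝ) + spr V + b with hβdef
  have hβ2 : 2 ≤ β := by rw [hβdef]; linarith
  have hβ1 : 1 ≤ β := by linarith
  have hβu : β ≤ u := by rw [hβdef, hudef, hYdef]; linarith
  have hWb : ∀ x, 2 * (d:ℝ) + (V x + b * chi Γ x) - EbxF (fun x => V x + b * chi Γ x) Λ ≤ β := by
    intro x
    have h1 := V_le_sSup hV x
    have h2 : b * chi Γ x ≤ b := mul_le_of_le_one_right hb0 (chi_le_one Γ x)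
    have h3 : spr V = sSup (Set.range V) - sInf (Set.range V) := rfl
    rw [hβdef]
    linarith
  have hP0 : 0 ≤ ∑ᶠ x, chi Γ x * ψ x ^ 2 :=
    finsum_nonneg fun x => mul_nonneg (chi_nonneg Γ x) (sq_nonneg _)
  have hmass := mass_lemma K Q hd hK Γ hΓ Z (fun x => V x + b * chi Γ x) ψ
    (EbxF (fun x => V x + b * chi Γ x) Λ) β hψ0 hs hn heig hWb hβ1
  have hdk : d * K = d * (K - 1) + d := by
    have hK1 : K - 1 + 1 = K := by omega
    calc d * K = d * (K - 1 + 1) := by rw [hK1]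
      _ = d * (K - 1) + d := by ring
  have hassoc : 2 * d * K = 2 * (d * K) := by ring
  have hdK1 : 1 ≤ d * K := Nat.mul_pos hd hK
  have hm_le : 2 * (d * (K - 1)) + 1 ≤ 2 * d * K - 1 := by omega
  have hu0 : (0:ℝ) < u := by linarith
  have hstar : β ^ (2 * (d * (K - 1)) + 1) ≤ u ^ (2 * d * K) * (β - 1) := by
    have e1 : β ^ (2 * (d * (K - 1)) + 1) ≤ u ^ (2 * (d * (K - 1)) + 1) :=
      pow_le_pow_left₀ (by linarith) hβu _
    have e2 : u ^ (2 * (d * (K - 1)) + 1) ≤ u ^ (2 * d * K - 1) :=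
      pow_le_pow_right₀ (by linarith) hm_le
    have hexp : 2 * d * K = (2 * d * K - 1) + 1 := by omega
    have h4 : 1 ≤ u * (β - 1) := by nlinarith
    have hpow : u ^ (2 * d * K - 1) * u = u ^ (2 * d * K) := by
      rw [← pow_succ, ← hexp]
    have e3 : u ^ (2 * d * K - 1) ≤ u ^ (2 * d * K) * (β - 1) := by
      calc u ^ (2 * d * K - 1) = u ^ (2 * d * K - 1) * 1 := (mul_one _).symm
        _ ≤ u ^ (2 * d * K - 1) * (u * (β - 1)) :=
            mul_le_mul_of_nonneg_left h4 (pow_nonneg (by linarith) _)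
        _ = u ^ (2 * d * K) * (β - 1) := by rw [← hpow]; ring
    linarith
  have hQP : (Q:ℝ) ≤ u ^ (2 * d * K) * ∑ᶠ x, chi Γ x * ψ x ^ 2 := by
    have h2 : (Q:ℝ) * (β - 1) ≤ (u ^ (2 * d * K) * ∑ᶠ x, chi Γ x * ψ x ^ 2) * (β - 1) := by
      calc (Q:ℝ) * (β - 1) ≤ β ^ (2 * (d * (K - 1)) + 1) * ∑ᶠ x, chi Γ x * ψ x ^ 2 := hmass
        _ ≤ (u ^ (2 * d * K) * (β - 1)) * ∑ᶠ x, chi Γ x * ψ x ^ 2 :=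
            mul_le_mul_of_nonneg_right hstar hP0
        _ = (u ^ (2 * d * K) * ∑ᶠ x, chi Γ x * ψ x ^ 2) * (β - 1) := by ring
    exact le_of_mul_le_mul_right h2 (by linarith)
  have hPsum : ∑ᶠ x, chi Γ x * ψ x ^ 2 = ∑ x ∈ Λ, chi Γ x * ψ x ^ 2 := by
    refine finsum_eq_sum_of_support_subset _ ?_
    intro x hx
    have : ψ x ≠ 0 := fun h => hx (by simp [h])
    exact hs this
  have hFH : EbxF (fun x => V x + a * chi Γ x) Λ
      ≤ EbxF (fun x => V x + b * chi Γ x) Λ - (b - a) * ∑ᶠ x, chi Γ x * ψ x ^ 2 := by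
    have h1 := EbxF_le_energy (fun x => V x + a * chi Γ x) Λ (sInf (Set.range V))
      (hc₁W a h0a) ψ hs hn
    have h2 := energy_shift_pot V (chi Γ) ψ a b Λ hs
    rw [h2, hE, ← hPsum] at h1
    exact h1
  -- numeric part
  have h2dK : 2 ≤ 2 * d * K := by omega
  set N : ℕ := 2 * d * K - 2 with hNdef
  have hNe1 : N + 1 = 2 * d * K - 1 := by omega
  have hNe2 : N + 2 = 2 * d * K := by omega
  have hdiff := inv_pow_diff N u v hu0 huv
  rw [hNe1, hNe2] at hdiff
  have hvu : v - u = b - a := by rw [hudef, hvdef]; ring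
  rw [hvu] at hdiff
  have hcast : ((N:ℝ) + 1) = ((2 * d * K - 1 : ℕ) : ℝ) := by
    rw [← hNe1]; push_cast; ring
  rw [hcast] at hdiff
  set n'r : ℝ := ((2 * d * K - 1 : ℕ) : ℝ) with hn'rdef
  have hn'pos : 0 < 2 * d * K - 1 := by omega
  have hn'r1 : 1 ≤ n'r := by rw [hn'rdef]; exact_mod_cast hn'pos
  have hn'r0 : n'r ≠ 0 := by linarith
  have hupow0 : (u:ℝ) ^ (2 * d * K) ≠ 0 := by positivity
  have hchain : (Q:ℝ) / n'r * ((u ^ (2 * d * K - 1))⁻¹ - (v ^ (2 * d * K - 1))⁻¹)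
      ≤ (b - a) * ∑ᶠ x, chi Γ x * ψ x ^ 2 := by
    have h0 : (0:ℝ) ≤ (Q:ℝ) / n'r := by positivity
    calc (Q:ℝ) / n'r * ((u ^ (2 * d * K - 1))⁻¹ - (v ^ (2 * d * K - 1))⁻¹)
        ≤ (Q:ℝ) / n'r * (n'r * (b - a) / u ^ (2 * d * K)) :=
          mul_le_mul_of_nonneg_left hdiff h0
      _ = (b - a) * ((Q:ℝ) * (u ^ (2 * d * K))⁻¹) := by
          field_simp
      _ ≤ (b - a) * ∑ᶠ x, chi Γ x * ψ x ^ 2 := by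
          refine mul_le_mul_of_nonneg_left ?_ (by linarith)
          rw [mul_inv_le_iff₀ (by positivity)]
          calc (Q:ℝ) ≤ u ^ (2 * d * K) * ∑ᶠ x, chi Γ x * ψ x ^ 2 := hQP
            _ = (∑ᶠ x, chi Γ x * ψ x ^ 2) * u ^ (2 * d * K) := by ring
  linarith [hchain, hFH]

lemma steps (K Q : ℕ) (hd : 0 < d) (hK : 0 < K)
    (Γ : Set (Zd d)) (hΓ : RelDense Γ K Q) (V : Zd d → ℝ) (hV : BddPot V)
    (Z : Finset (Zd d)) (hΛne : (Z.biUnion (cellK K)).Nonempty) :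
    ∀ N : ℕ, ∀ a b : ℝ, 0 ≤ a → a ≤ b → b ≤ a + (N:ℝ) →
    (Q : ℝ) / ((2 * d * K - 1 : ℕ) : ℝ) *
        (((2 * (d : ℝ) + 1 + spr V + a) ^ (2 * d * K - 1))⁻¹ -
          ((2 * (d : ℝ) + 1 + spr V + b) ^ (2 * d * K - 1))⁻¹) ≤
      EbxF (fun x => V x + b * chi Γ x) (Z.biUnion (cellK K))
        - EbxF (fun x => V x + a * chi Γ x) (Z.biUnion (cellK K)) := by
  intro N
  induction N with
  | zero =>
    intro a b h0a hab hba
    have hb : b = a := le_antisymm (by simpa using hba) hab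
    subst hb
    simp
  | succ N ih =>
    intro a b h0a hab hba
    by_cases hb1 : b ≤ a + 1
    · exact base_step K Q hd hK Γ hΓ V hV Z hΛne a b h0a hab hb1
    · push_neg at hb1
      have h1 := base_step K Q hd hK Γ hΓ V hV Z hΛne a (a+1) h0a (by linarith) le_rfl
      have h2 := ih (a+1) b (by linarith) (by linarith)
        (by push_cast at hba ⊢; linarith)
      have hsplit : (Q : ℝ) / ((2 * d * K - 1 : ℕ) : ℝ) *
          (((2 * (d : ℝ) + 1 + spr V + a) ^ (2 * d * K - 1))⁻¹ -
            ((2 * (d : ℝ) + 1 + spr V + b) ^ (2 * d * K - 1))⁻¹)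
        = (Q : ℝ) / ((2 * d * K - 1 : ℕ) : ℝ) *
          (((2 * (d : ℝ) + 1 + spr V + a) ^ (2 * d * K - 1))⁻¹ -
            ((2 * (d : ℝ) + 1 + spr V + (a+1)) ^ (2 * d * K - 1))⁻¹)
        + (Q : ℝ) / ((2 * d * K - 1 : ℕ) : ℝ) *
          (((2 * (d : ℝ) + 1 + spr V + (a+1)) ^ (2 * d * K - 1))⁻¹ -
            ((2 * (d : ℝ) + 1 + spr V + b) ^ (2 * d * K - 1))⁻¹) := by ring
      linarith [h1, h2]

end S13

/-- for `Γ ⊊ ℤ^d` `(K,Q)`-relatively dense and all `t ≥ 0`,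
`E_Γ(H,t) - E_∅(H) ≥ (Q/(2dK-1)) (Y^{-(2dK-1)} - (Y+t)^{-(2dK-1)})`,
where `Y = 2d + 1 + spr(V)`. -/
theorem stmt13 (d K Q : ℕ) (hd : 0 < d) (hK : 0 < K) (hQ : 0 < Q)
    (Γ : Set (Zd d)) (hne : Γ ≠ Set.univ) (hΓ : RelDense Γ K Q)
    (V : Zd d → ℝ) (hV : BddPot V) :
    ∀ t : ℝ, 0 ≤ t →
      (Q : ℝ) / ((2 * d * K - 1 : ℕ) : ℝ) *
        (((2 * (d : ℝ) + 1 + spr V) ^ (2 * d * K - 1))⁻¹ -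
          ((2 * (d : ℝ) + 1 + spr V + t) ^ (2 * d * K - 1))⁻¹) ≤
      EGt V Γ t - E0 V := by
  intro t ht
  classical
  set c : ℝ := (Q : ℝ) / ((2 * d * K - 1 : ℕ) : ℝ) *
      (((2 * (d : ℝ) + 1 + spr V) ^ (2 * d * K - 1))⁻¹ -
        ((2 * (d : ℝ) + 1 + spr V + t) ^ (2 * d * K - 1))⁻¹) with hc
  -- the variational set for EGt is nonempty
  have hone : norm2 (S13.dlt (fun _ => (0:ℤ) : Zd d)) = 1 := S13.norm2_dlt _
  have hfin0 : (Function.support (S13.dlt (fun _ => (0:ℤ) : Zd d))).Finite :=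
    (Finset.finite_toSet _).subset (S13.supp_dlt _)
  have hsetne : {r | ∃ φ : Zd d → ℝ, (Function.support φ).Finite ∧ norm2 φ = 1 ∧
      r = energy (fun x => V x + t * chi Γ x) φ}.Nonempty :=
    ⟨_, _, hfin0, hone, rfl⟩
  have key : ∀ r ∈ {r | ∃ φ : Zd d → ℝ, (Function.support φ).Finite ∧ norm2 φ = 1 ∧
      r = energy (fun x => V x + t * chi Γ x) φ}, E0 V + c ≤ r := by
    rintro r ⟨φ, hfin, hnφ, rfl⟩
    set Z : Finset (Zd d) := insert (fun _ => (0:ℤ)) (hfin.toFinset.image (S13.zf K)) with hZ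
    set Λ : Finset (Zd d) := Z.biUnion (S13.cellK K) with hΛ
    have hsupp : Function.support φ ⊆ ↑Λ := by
      intro x hx
      refine Finset.mem_coe.2 (Finset.mem_biUnion.2 ⟨S13.zf K x, ?_, S13.mem_cellK_zf hK x⟩)
      exact Finset.mem_insert_of_mem
        (Finset.mem_image_of_mem _ (hfin.mem_toFinset.2 hx))
    have hΛne : Λ.Nonempty := by
      refine ⟨fun _ => -(((K/2 : ℕ) : ℤ)), Finset.mem_biUnion.2
        ⟨fun _ => (0:ℤ), Finset.mem_insert_self _ _, ?_⟩⟩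
      rw [S13.mem_cellK]
      intro i
      constructor <;> (simp only [mul_zero, zero_sub, neg_le_neg_iff]) <;> omega
    obtain ⟨ψt, hst, _, hnt, hEt, hmint, _⟩ :=
      S13.exists_gs (fun x => V x + t * chi Γ x) Λ hΛne
    have hrge : S13.EbxF (fun x => V x + t * chi Γ x) Λ
        ≤ energy (fun x => V x + t * chi Γ x) φ := by
      have := hmint φ hsupp
      rwa [hnφ, mul_one] at this
    have hstep := S13.steps K Q hd hK Γ hΓ V hV Z hΛne ⌈t⌉₊ 0 t le_rfl ht
      (by simpa using Nat.le_ceil t)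
    rw [← hΛ] at hstep
    have hW0 : (fun x => V x + 0 * chi Γ x) = V := funext fun x => by ring
    have hE0le : E0 V ≤ S13.EbxF (fun x => V x + 0 * chi Γ x) Λ := by
      rw [hW0]; exact S13.E0_le_EbxF V hV Λ hΛne
    have hY0 : (2 * (d:ℝ) + 1 + spr V + 0) = 2 * (d:ℝ) + 1 + spr V := by ring
    rw [hY0] at hstep
    rw [hc]
    linarith [hstep, hE0le, hrge]
  have hfinal : E0 V + c ≤ EGt V Γ t := by
    rw [EGt, E0]
    exact le_csInf hsetne key
  linarith
end
end

section
/- Let Γ ⊊ Z^d be (K,Q)-relatively dense. Then the ground state energy of the Γ-trimmed discrete Laplacian satisfies the Cheeger-type bound E_Γ(-Δ) ≥ β(Γ)²/(4d) ≥ 1/(4d K_*^{2d}). -/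
open scoped BigOperators

noncomputable section

section Helpers

open Function

variable {d : ℕ}

lemma unitVec_apply {d : ℕ} (i j : Fin d) : unitVec i j = if j = i then 1 else 0 := rfl

lemma add_unitVec_apply (x : Zd d) (i j : Fin d) :
    (x + unitVec i) j = x j + if j = i then 1 else 0 := rfl

lemma sub_unitVec_apply (x : Zd d) (i j : Fin d) :
    (x - unitVec i) j = x j - if j = i then 1 else 0 := rfl

lemma sub_add_unitVec (x : Zd d) (i : Fin d) : x - unitVec i + unitVec i = x := by
  abel

lemma add_sub_unitVec (x : Zd d) (i : Fin d) : x + unitVec i - unitVec i = x := by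
  abel

/-- shift invariance of `finsum`. -/
lemma finsum_shift (f : Zd d → ℝ) (v : Zd d) : (∑ᶠ x, f (x + v)) = ∑ᶠ x, f x :=
  finsum_comp_equiv (Equiv.addRight v)

lemma supp_shift_finite {f : Zd d → ℝ} (hf : (support f).Finite) (v : Zd d) :
    (support fun x => f (x + v)).Finite := by
  have : (support fun x => f (x + v)) = (Equiv.addRight v) ⁻¹' (support f) := by
    ext x; simp [Function.mem_support]
  rw [this]
  exact hf.preimage (Equiv.injective _).injOn

/-- closed neighborhood of a finite set, as a finset. -/
def nbhd (A : Finset (Zd d)) : Finset (Zd d) :=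
  A ∪ (Finset.univ.biUnion fun i => A.image (· + unitVec i))
    ∪ (Finset.univ.biUnion fun i => A.image (· - unitVec i))

lemma mem_nbhd_self {A : Finset (Zd d)} {x : Zd d} (hx : x ∈ A) : x ∈ nbhd A := by
  simp [nbhd, hx]

lemma mem_nbhd_of_add {A : Finset (Zd d)} {x : Zd d} (i : Fin d)
    (hx : x + unitVec i ∈ A) : x ∈ nbhd A := by
  have : x = (x + unitVec i) - unitVec i := by abel
  simp only [nbhd, Finset.mem_union, Finset.mem_biUnion, Finset.mem_image]
  exact Or.inr ⟨i, Finset.mem_univ i, _, hx, this.symm⟩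

lemma mem_nbhd_of_sub {A : Finset (Zd d)} {x : Zd d} (i : Fin d)
    (hx : x - unitVec i ∈ A) : x ∈ nbhd A := by
  have : x = (x - unitVec i) + unitVec i := by abel
  simp only [nbhd, Finset.mem_union, Finset.mem_biUnion, Finset.mem_image]
  exact Or.inl (Or.inr ⟨i, Finset.mem_univ i, _, hx, this.symm⟩)

lemma subset_nbhd {A : Finset (Zd d)} : A ⊆ nbhd A := fun _ hx => mem_nbhd_self hx

/-- Workhorse: a finsum of edge-type quantities reduces to a finset sum over `nbhd A`. -/
lemma finsum_pair_eq_sum (g : Zd d → ℝ) (A : Finset (Zd d))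
    (hg : support g ⊆ ↑A) (F : ℝ → ℝ → ℝ) (hF : F 0 0 = 0) :
    (∑ᶠ x, ∑ i, F (g x) (g (x + unitVec i))) =
      ∑ x ∈ nbhd A, ∑ i, F (g x) (g (x + unitVec i)) := by
  apply finsum_eq_sum_of_support_subset
  intro x hx
  rcases Finset.exists_ne_zero_of_sum_ne_zero hx with ⟨i, -, hi⟩
  by_cases h1 : g x = 0
  · by_cases h2 : g (x + unitVec i) = 0
    · exact absurd (by rw [h1, h2, hF]) hi
    · exact mem_nbhd_of_add i (hg h2)
  · exact mem_nbhd_self (hg h1)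

end Helpers
section SBP

open Function

variable {d : ℕ}

lemma supp_mul_left (φ f : Zd d → ℝ) : support (fun x => φ x * f x) ⊆ support φ := by
  intro x hx
  simp only [mem_support] at hx ⊢
  exact fun h => hx (by rw [h, zero_mul])

/-- summation by parts: `⟨φ, -Δφ⟩ = Σ_x Σ_i (φ(x) - φ(x+eᵢ))²`. -/
lemma energy_eq_edge (φ : Zd d → ℝ) (hφ : (support φ).Finite) :
    energy (fun _ => 0) φ = ∑ᶠ x, ∑ i, (φ x - φ (x + unitVec i)) ^ 2 := by
  classical
  set A : Finset (Zd d) := hφ.toFinset with hA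
  have hsupp : support φ ⊆ ↑A := by simp [hA]
  have hrw : energy (fun _ => 0) φ = ∑ᶠ x, φ x * negLap φ x := by
    unfold energy; congr 1; funext x; ring_nf
  rw [hrw]
  have h1 : (∑ᶠ x, φ x * negLap φ x) = ∑ x ∈ nbhd A, φ x * negLap φ x := by
    apply finsum_eq_sum_of_support_subset
    exact fun x hx => subset_nbhd (hsupp (supp_mul_left φ (negLap φ) hx))
  rw [h1]
  have h2 : ∀ x, φ x * negLap φ x =
      ∑ i, (φ x * (φ x - φ (x + unitVec i)) + φ x * (φ x - φ (x - unitVec i))) := by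
    intro x
    unfold negLap
    rw [Finset.mul_sum]
    exact Finset.sum_congr rfl fun i _ => by ring
  simp_rw [h2]
  rw [Finset.sum_comm]
  have h3 : ∀ i : Fin d,
      (∑ x ∈ nbhd A, (φ x * (φ x - φ (x + unitVec i)) + φ x * (φ x - φ (x - unitVec i)))) =
      ∑ᶠ x, (φ x - φ (x + unitVec i)) ^ 2 := by
    intro i
    rw [Finset.sum_add_distrib]
    have hP : (∑ x ∈ nbhd A, φ x * (φ x - φ (x + unitVec i))) =
        ∑ᶠ x, φ x * (φ x - φ (x + unitVec i)) :=
      (finsum_eq_sum_of_support_subset _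
        (fun x hx => subset_nbhd (hsupp (supp_mul_left _ _ hx)))).symm
    have hM : (∑ x ∈ nbhd A, φ x * (φ x - φ (x - unitVec i))) =
        ∑ᶠ x, φ x * (φ x - φ (x - unitVec i)) :=
      (finsum_eq_sum_of_support_subset _
        (fun x hx => subset_nbhd (hsupp (supp_mul_left _ _ hx)))).symm
    rw [hP, hM]
    have hM2 : (∑ᶠ x, φ x * (φ x - φ (x - unitVec i))) =
        ∑ᶠ x, φ (x + unitVec i) * (φ (x + unitVec i) - φ x) := by
      rw [← finsum_shift (fun x => φ x * (φ x - φ (x - unitVec i))) (unitVec i)]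
      congr 1; funext x; rw [add_sub_unitVec]
    rw [hM2]
    have hfin1 : (support fun x => φ x * (φ x - φ (x + unitVec i))).Finite :=
      hφ.subset (supp_mul_left _ _)
    have hfin2 : (support fun x => φ (x + unitVec i) * (φ (x + unitVec i) - φ x)).Finite := by
      have := supp_shift_finite hφ (unitVec i)
      exact this.subset (supp_mul_left (fun x => φ (x + unitVec i)) _)
    rw [← finsum_add_distrib hfin1 hfin2]
    congr 1; funext x; ring
  rw [Finset.sum_congr rfl fun i _ => h3 i]
  -- now swap back
  have h4 : (∑ᶠ x, ∑ i, (φ x - φ (x + unitVec i)) ^ 2) =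
      ∑ x ∈ nbhd A, ∑ i, (φ x - φ (x + unitVec i)) ^ 2 :=
    finsum_pair_eq_sum φ A hsupp (fun a b => (a - b) ^ 2) (by norm_num)
  rw [h4, Finset.sum_comm]
  apply Finset.sum_congr rfl
  intro i _
  refine finsum_eq_sum_of_support_subset (fun x => (φ x - φ (x + unitVec i)) ^ 2)
    (fun x hx => ?_)
  by_cases h1 : φ x = 0
  · by_cases hsub : φ (x + unitVec i) = 0
    · exact absurd (show (φ x - φ (x + unitVec i)) ^ 2 = 0 by rw [h1, hsub]; ring) hx
    · exact mem_nbhd_of_add i (hsupp hsub)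
  · exact subset_nbhd (hsupp h1)

end SBP
section Chi

open Function

variable {d : ℕ}

lemma chi_eq (A : Set (Zd d)) (x : Zd d) [Decidable (x ∈ A)] :
    chi A x = if x ∈ A then 1 else 0 := by
  unfold chi Set.indicator; split <;> simp_all

lemma chi_mem {A : Set (Zd d)} {x : Zd d} (hx : x ∈ A) : chi A x = 1 :=
  Set.indicator_of_mem hx _

lemma chi_not_mem {A : Set (Zd d)} {x : Zd d} (hx : x ∉ A) : chi A x = 0 :=
  Set.indicator_of_notMem hx _

lemma supp_chi (A : Finset (Zd d)) : support (chi (↑A : Set (Zd d))) ⊆ ↑A := by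
  intro x hx
  by_contra h
  exact hx (chi_not_mem h)

lemma supp_chi_finite (A : Finset (Zd d)) : (support (chi (↑A : Set (Zd d)))).Finite :=
  A.finite_toSet.subset (supp_chi A)

/-- the quadratic form of a finite set equals the edge-counting sum. -/
lemma qform_eq_edge (A : Finset (Zd d)) :
    qform A = ∑ᶠ x, ∑ i, (chi (↑A : Set (Zd d)) x - chi (↑A) (x + unitVec i)) ^ 2 := by
  classical
  have h0 : qform A = energy (fun _ => 0) (chi (↑A : Set (Zd d))) := by
    unfold qform energy
    rw [finsum_eq_sum_of_support_subset
      (f := fun x => chi (↑A : Set (Zd d)) x * (negLap (chi ↑A) x + 0 * chi (↑A) x))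
      (s := A) (fun x hx => by
        by_contra h
        exact hx (by simp only []; rw [chi_not_mem (show x ∉ (↑A : Set (Zd d)) by simpa using h)]; ring))]
    apply Finset.sum_congr rfl
    intro x hx
    rw [chi_mem (by simpa using hx)]; ring
  rw [h0, energy_eq_edge _ (supp_chi_finite A)]

lemma qform_eq_sum (A : Finset (Zd d)) :
    qform A = ∑ x ∈ nbhd A, ∑ i, (chi (↑A : Set (Zd d)) x - chi (↑A) (x + unitVec i)) ^ 2 := by
  rw [qform_eq_edge]
  exact finsum_pair_eq_sum _ A (supp_chi A) (fun a b => (a - b) ^ 2) (by norm_num)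

lemma qform_nonneg (A : Finset (Zd d)) : 0 ≤ qform A := by
  rw [qform_eq_sum]
  exact Finset.sum_nonneg fun x _ => Finset.sum_nonneg fun i _ => sq_nonneg _

lemma betaG_nonneg_lb (Γ : Set (Zd d)) :
    ∀ r ∈ {r | ∃ A : Finset (Zd d), A.Nonempty ∧ (↑A : Set (Zd d)) ⊆ Γᶜ ∧
      r = qform A / A.card}, (0:ℝ) ≤ r := by
  rintro r ⟨A, -, -, rfl⟩
  exact div_nonneg (qform_nonneg A) (by positivity)

lemma betaG_le (Γ : Set (Zd d)) (A : Finset (Zd d)) (hA : A.Nonempty)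
    (hsub : (↑A : Set (Zd d)) ⊆ Γᶜ) : betaG Γ ≤ qform A / A.card :=
  csInf_le ⟨0, betaG_nonneg_lb Γ⟩ ⟨A, hA, hsub, rfl⟩

lemma beta_mul_card_le (Γ : Set (Zd d)) (A : Finset (Zd d)) (hA : A.Nonempty)
    (hsub : (↑A : Set (Zd d)) ⊆ Γᶜ) : betaG Γ * A.card ≤ qform A := by
  have hpos : (0:ℝ) < A.card := by exact_mod_cast Finset.card_pos.2 hA
  have := betaG_le Γ A hA hsub
  calc betaG Γ * A.card ≤ (qform A / A.card) * A.card := by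
        exact mul_le_mul_of_nonneg_right this hpos.le
    _ = qform A := by field_simp

end Chi
section Coarea

open Function

variable {d : ℕ}

lemma coarea (Γ : Set (Zd d)) (g : Zd d → ℝ) (hfin : (support g).Finite)
    (hpos : ∀ x, 0 ≤ g x) (hG : ∀ x ∈ Γ, g x = 0) :
    betaG Γ * ∑ᶠ x, g x ≤ ∑ᶠ x, ∑ i, |g x - g (x + unitVec i)| := by
  classical
  suffices H : ∀ n : ℕ, ∀ g : Zd d → ℝ, ∀ hfin : (support g).Finite,
      (hfin.toFinset.image g).card ≤ n → (∀ x, 0 ≤ g x) → (∀ x ∈ Γ, g x = 0) →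
      betaG Γ * ∑ᶠ x, g x ≤ ∑ᶠ x, ∑ i, |g x - g (x + unitVec i)| by
    exact H _ g hfin le_rfl hpos hG
  intro n
  induction n with
  | zero =>
    intro g hfin hcard hpos hG
    have hg0 : ∀ x, g x = 0 := by
      intro x
      by_contra h
      have : g x ∈ hfin.toFinset.image g :=
        Finset.mem_image_of_mem g (hfin.mem_toFinset.2 h)
      have := Finset.card_pos.2 ⟨_, this⟩
      omega
    have h1 : (∑ᶠ x, g x) = 0 := by
      have : g = fun _ => (0:ℝ) := funext hg0
      rw [this]; exact finsum_zero
    have h2 : (∑ᶠ x, ∑ i, |g x - g (x + unitVec i)|) = 0 := by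
      have : (fun x => ∑ i : Fin d, |g x - g (x + unitVec i)|) = fun _ => (0:ℝ) := by
        funext x; simp [hg0]
      rw [this]; exact finsum_zero
    rw [h1, h2, mul_zero]
  | succ n IH =>
    intro g hfin hcard hpos hG
    by_cases hz : ∀ x, g x = 0
    · have h1 : (∑ᶠ x, g x) = 0 := by rw [funext hz]; exact finsum_zero
      have h2 : (∑ᶠ x, ∑ i, |g x - g (x + unitVec i)|) = 0 := by
        have : (fun x => ∑ i : Fin d, |g x - g (x + unitVec i)|) = fun _ => (0:ℝ) := by
          funext x; simp [hz]
        rw [this]; exact finsum_zero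
      rw [h1, h2, mul_zero]
    · push_neg at hz
      obtain ⟨x₀, hx₀⟩ := hz
      set A : Finset (Zd d) := hfin.toFinset with hA
      have hAsupp : (↑A : Set (Zd d)) = support g := hfin.coe_toFinset
      have hAne : A.Nonempty := ⟨x₀, hfin.mem_toFinset.2 hx₀⟩
      set vals := A.image g with hvals
      have hvne : vals.Nonempty := hAne.image g
      set t := vals.min' hvne with ht
      have htpos : 0 < t := by
        obtain ⟨x, hx, hxt⟩ := Finset.mem_image.1 (vals.min'_mem hvne)
        have : g x ≠ 0 := by rw [hA, hfin.mem_toFinset] at hx; exact hx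
        rw [ht, ← hxt]
        exact lt_of_le_of_ne (hpos x) (Ne.symm this)
      have hget : ∀ x ∈ A, t ≤ g x := fun x hx => vals.min'_le _ (Finset.mem_image_of_mem g hx)
      set g' : Zd d → ℝ := fun x => g x - t * chi (↑A : Set (Zd d)) x with hg'
      have hnotmem : ∀ x, x ∉ A → g x = 0 := by
        intro x hx
        by_contra h
        exact hx (hfin.mem_toFinset.2 h)
      have hg'mem : ∀ x, x ∈ A → g' x = g x - t := by
        intro x hx
        simp only [hg']
        rw [chi_mem (Finset.mem_coe.2 hx)]; ring
      have hg'not : ∀ x, x ∉ A → g' x = 0 := by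
        intro x hx
        simp only [hg']
        rw [chi_not_mem (fun h => hx (Finset.mem_coe.1 h)), hnotmem x hx]; ring
      have hsupp' : support g' ⊆ ↑A := by
        intro x hx
        by_contra h
        exact hx (hg'not x (fun h' => h (Finset.mem_coe.2 h')))
      have hfin' : (support g').Finite := A.finite_toSet.subset hsupp'
      have hpos' : ∀ x, 0 ≤ g' x := by
        intro x
        by_cases hx : x ∈ A
        · rw [hg'mem x hx]; linarith [hget x hx]
        · rw [hg'not x hx]
      have hG' : ∀ x ∈ Γ, g' x = 0 := by
        intro x hx
        apply hg'not
        intro hxA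
        have : g x ≠ 0 := by rwa [hA, hfin.mem_toFinset] at hxA
        exact this (hG x hx)
      have hcard' : (hfin'.toFinset.image g').card ≤ n := by
        have himg : hfin'.toFinset.image g' ⊆ (vals.image (fun v => v - t)).erase 0 := by
          intro v hv
          obtain ⟨x, hx, rfl⟩ := Finset.mem_image.1 hv
          have hxs : g' x ≠ 0 := by rwa [hfin'.mem_toFinset] at hx
          have hxA : x ∈ A := Finset.mem_coe.1 (hsupp' (by rwa [hfin'.mem_toFinset] at hx))
          rw [Finset.mem_erase]
          exact ⟨hxs, Finset.mem_image.2 ⟨g x, Finset.mem_image_of_mem g hxA,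
            (hg'mem x hxA).symm⟩⟩
        have h0mem : (0:ℝ) ∈ vals.image (fun v => v - t) :=
          Finset.mem_image.2 ⟨t, vals.min'_mem hvne, sub_self t⟩
        have := Finset.card_le_card himg
        rw [Finset.card_erase_of_mem h0mem] at this
        have h2 := Finset.card_image_le (s := vals) (f := fun v => v - t)
        omega
      -- sum identity
      have hchisum : (∑ᶠ x, t * chi (↑A : Set (Zd d)) x) = t * A.card := by
        rw [finsum_eq_sum_of_support_subset (f := fun x => t * chi (↑A : Set (Zd d)) x)
          (s := A) (fun x hx => by
            by_contra h
            exact hx (by simp only []; rw [chi_not_mem (fun h' => h (Finset.mem_coe.1 h'))]; ring))]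
        rw [Finset.sum_congr rfl (fun x hx => by rw [chi_mem (Finset.mem_coe.2 hx)])]
        rw [Finset.sum_const, nsmul_eq_mul, mul_comm]
        simp
      have hS : (∑ᶠ x, g x) = (∑ᶠ x, g' x) + t * A.card := by
        have h1 : g = fun x => g' x + t * chi (↑A : Set (Zd d)) x := by
          funext x; simp only [hg']; ring
        have hfin2 : (support fun x => t * chi (↑A : Set (Zd d)) x).Finite := by
          apply (supp_chi_finite A).subset
          intro x hx
          simp only [Function.mem_support] at hx ⊢
          exact fun h => hx (by rw [h, mul_zero])
        rw [← hchisum, ← finsum_add_distrib hfin' hfin2]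
        exact congrArg _ (by rw [h1])
      have hsuppg : support g ⊆ ↑A :=
        fun x hx => Finset.mem_coe.2 (hfin.mem_toFinset.2 hx)
      have hT : (∑ᶠ x, ∑ i, |g x - g (x + unitVec i)|) =
          (∑ᶠ x, ∑ i, |g' x - g' (x + unitVec i)|) + t * qform A := by
        have e1 := finsum_pair_eq_sum g A hsuppg (fun a b => |a - b|) (by simp)
        have e2 := finsum_pair_eq_sum g' A hsupp' (fun a b => |a - b|) (by simp)
        rw [e1, e2, qform_eq_sum A, Finset.mul_sum, ← Finset.sum_add_distrib]
        beta_reduce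
        apply Finset.sum_congr rfl; intro x _
        rw [Finset.mul_sum, ← Finset.sum_add_distrib]
        apply Finset.sum_congr rfl; intro i _
        by_cases hx : x ∈ A <;> by_cases hy : x + unitVec i ∈ A
        · rw [hg'mem x hx, hg'mem _ hy, chi_mem (Finset.mem_coe.2 hx),
            chi_mem (Finset.mem_coe.2 hy)]
          have h4 : g x - t - (g (x + unitVec i) - t) = g x - g (x + unitVec i) := by ring
          rw [h4]; ring
        · rw [hg'mem x hx, hg'not _ hy, hnotmem _ hy, chi_mem (Finset.mem_coe.2 hx),
            chi_not_mem (fun h => hy (Finset.mem_coe.1 h))]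
          have h1 : t ≤ g x := hget x hx
          rw [sub_zero, sub_zero, abs_of_nonneg (by linarith), abs_of_nonneg (by linarith)]
          ring
        · rw [hg'not x hx, hg'mem _ hy, hnotmem _ hx, chi_not_mem (fun h => hx (Finset.mem_coe.1 h)),
            chi_mem (Finset.mem_coe.2 hy)]
          have h1 : t ≤ g (x + unitVec i) := hget _ hy
          rw [zero_sub, zero_sub, abs_neg, abs_neg, abs_of_nonneg (by linarith),
            abs_of_nonneg (by linarith)]
          ring
        · rw [hg'not x hx, hg'not _ hy, hnotmem _ hx, hnotmem _ hy,
            chi_not_mem (fun h => hx (Finset.mem_coe.1 h)),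
            chi_not_mem (fun h => hy (Finset.mem_coe.1 h))]
          simp
      have hsub : (↑A : Set (Zd d)) ⊆ Γᶜ := by
        intro x hx hxΓ
        have h1 : g x ≠ 0 := hfin.mem_toFinset.1 (Finset.mem_coe.1 hx)
        exact h1 (hG x hxΓ)
      have hq := beta_mul_card_le Γ A hAne hsub
      have hIH := IH g' hfin' hcard' hpos' hG'
      rw [hS, hT]
      have hsplit : betaG Γ * ((∑ᶠ x, g' x) + t * ↑A.card) =
          betaG Γ * (∑ᶠ x, g' x) + t * (betaG Γ * ↑A.card) := by ring
      rw [hsplit]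
      have h2 : t * (betaG Γ * ↑A.card) ≤ t * qform A :=
        mul_le_mul_of_nonneg_left hq htpos.le
      linarith

end Coarea
section Cheeger

open Function

variable {d : ℕ}

lemma cheeger_bound (Γ : Set (Zd d)) (hd : 0 < d) (hb : 0 ≤ betaG Γ)
    (φ : Zd d → ℝ) (hφ : (support φ).Finite) (hΓφ : ∀ x ∈ Γ, φ x = 0)
    (hn : norm2 φ = 1) :
    betaG Γ ^ 2 / (4 * d) ≤ energy (fun _ => 0) φ := by
  classical
  set A : Finset (Zd d) := hφ.toFinset with hA
  have hsupp : support φ ⊆ ↑A := fun x hx => Finset.mem_coe.2 (hφ.mem_toFinset.2 hx)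
  set s : Finset (Zd d) := nbhd A with hs
  set pr : Finset (Zd d × Fin d) := s ×ˢ Finset.univ with hpr
  -- energy = Q
  have hQ : energy (fun _ => 0) φ =
      ∑ p ∈ pr, (φ p.1 - φ (p.1 + unitVec p.2)) ^ 2 := by
    rw [energy_eq_edge φ hφ,
      finsum_pair_eq_sum φ A hsupp (fun a b => (a - b) ^ 2) (by norm_num),
      Finset.sum_product]
  have hQ0 : (0:ℝ) ≤ ∑ p ∈ pr, (φ p.1 - φ (p.1 + unitVec p.2)) ^ 2 :=
    Finset.sum_nonneg fun p _ => sq_nonneg _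
  -- the coarea estimate
  have hsuppg : support (fun x => φ x ^ 2) ⊆ ↑A := by
    intro x hx
    apply hsupp
    simp only [mem_support] at hx ⊢
    exact fun h => hx (by rw [h]; ring)
  have hT0 : betaG Γ * (1:ℝ) ≤ ∑ᶠ x, ∑ i, |φ x ^ 2 - φ (x + unitVec i) ^ 2| := by
    have := coarea Γ (fun x => φ x ^ 2) (A.finite_toSet.subset hsuppg)
      (fun x => sq_nonneg _) (fun x hx => by show φ x ^ 2 = 0; rw [hΓφ x hx]; ring)
    rwa [show (∑ᶠ x, φ x ^ 2) = 1 from hn] at this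
  have hTs : (∑ᶠ x, ∑ i, |φ x ^ 2 - φ (x + unitVec i) ^ 2|) =
      ∑ p ∈ pr, |φ p.1 ^ 2 - φ (p.1 + unitVec p.2) ^ 2| := by
    rw [finsum_pair_eq_sum φ A hsupp (fun a b => |a ^ 2 - b ^ 2|) (by simp),
      Finset.sum_product]
  have hT : betaG Γ ≤ ∑ p ∈ pr, |φ p.1 ^ 2 - φ (p.1 + unitVec p.2) ^ 2| := by
    rw [← hTs]; simpa using hT0
  -- Cauchy-Schwarz
  have hCS := Finset.sum_mul_sq_le_sq_mul_sq pr
    (fun p => |φ p.1 - φ (p.1 + unitVec p.2)|) (fun p => |φ p.1 + φ (p.1 + unitVec p.2)|)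
  have hprod : ∀ p : Zd d × Fin d,
      |φ p.1 - φ (p.1 + unitVec p.2)| * |φ p.1 + φ (p.1 + unitVec p.2)| =
      |φ p.1 ^ 2 - φ (p.1 + unitVec p.2) ^ 2| := by
    intro p
    rw [← abs_mul]
    congr 1
    ring
  have hsq1 : ∀ p : Zd d × Fin d, |φ p.1 - φ (p.1 + unitVec p.2)| ^ 2 =
      (φ p.1 - φ (p.1 + unitVec p.2)) ^ 2 := fun p => sq_abs _
  have hsq2 : ∀ p : Zd d × Fin d, |φ p.1 + φ (p.1 + unitVec p.2)| ^ 2 =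
      (φ p.1 + φ (p.1 + unitVec p.2)) ^ 2 := fun p => sq_abs _
  rw [Finset.sum_congr rfl (fun p _ => hprod p),
    Finset.sum_congr rfl (fun p _ => hsq1 p),
    Finset.sum_congr rfl (fun p _ => hsq2 p)] at hCS
  -- bound P ≤ 4d
  have hnorms : (∑ x ∈ s, φ x ^ 2) = 1 := by
    rw [← finsum_eq_sum_of_support_subset (fun x => φ x ^ 2)
      (fun x hx => subset_nbhd (hsuppg hx))]
    exact hn
  have hshift : ∀ i : Fin d, (∑ x ∈ s, φ (x + unitVec i) ^ 2) = 1 := by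
    intro i
    rw [← finsum_eq_sum_of_support_subset (fun x => φ (x + unitVec i) ^ 2)
      (fun x hx => mem_nbhd_of_add i (hsupp (by
        simp only [mem_support] at hx ⊢
        exact fun h => hx (by rw [h]; ring)))),
      finsum_shift (fun x => φ x ^ 2) (unitVec i)]
    exact hn
  have hP : (∑ p ∈ pr, (φ p.1 + φ (p.1 + unitVec p.2)) ^ 2) ≤ 4 * d := by
    have step1 : (∑ p ∈ pr, (φ p.1 + φ (p.1 + unitVec p.2)) ^ 2) ≤
        ∑ p ∈ pr, (2 * φ p.1 ^ 2 + 2 * φ (p.1 + unitVec p.2) ^ 2) := by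
      apply Finset.sum_le_sum
      intro p _
      nlinarith [sq_nonneg (φ p.1 - φ (p.1 + unitVec p.2))]
    have step2 : (∑ p ∈ pr, (2 * φ p.1 ^ 2 + 2 * φ (p.1 + unitVec p.2) ^ 2)) = 4 * (d:ℝ) := by
      rw [Finset.sum_add_distrib]
      have e1 : (∑ p ∈ pr, 2 * φ p.1 ^ 2) = 2 * (d:ℝ) := by
        rw [hpr, Finset.sum_product]
        have h1 : ∀ x : Zd d, (∑ _i : Fin d, 2 * φ x ^ 2) = (d:ℝ) * (2 * φ x ^ 2) := by
          intro x
          rw [Finset.sum_const, Finset.card_univ, Fintype.card_fin, nsmul_eq_mul]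
        rw [Finset.sum_congr rfl fun x _ => h1 x, ← Finset.mul_sum, ← Finset.mul_sum,
          hnorms]
        ring
      have e2 : (∑ p ∈ pr, 2 * φ (p.1 + unitVec p.2) ^ 2) = 2 * (d:ℝ) := by
        rw [hpr, Finset.sum_product, Finset.sum_comm]
        have h1 : ∀ i : Fin d, (∑ x ∈ s, 2 * φ (x + unitVec i) ^ 2) = 2 := by
          intro i
          rw [← Finset.mul_sum, hshift i, mul_one]
        rw [Finset.sum_congr rfl fun i _ => h1 i, Finset.sum_const, Finset.card_univ,
          Fintype.card_fin, nsmul_eq_mul]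
        ring
      rw [e1, e2]; ring
    linarith
  -- combine
  have h4d : (0:ℝ) < 4 * (d:ℝ) := by positivity
  have hb2 : betaG Γ ^ 2 ≤ (∑ p ∈ pr, |φ p.1 ^ 2 - φ (p.1 + unitVec p.2) ^ 2|) ^ 2 :=
    pow_le_pow_left₀ hb hT 2
  have hQP : (∑ p ∈ pr, (φ p.1 - φ (p.1 + unitVec p.2)) ^ 2) *
        (∑ p ∈ pr, (φ p.1 + φ (p.1 + unitVec p.2)) ^ 2) ≤
      (∑ p ∈ pr, (φ p.1 - φ (p.1 + unitVec p.2)) ^ 2) * (4 * (d:ℝ)) :=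
    mul_le_mul_of_nonneg_left hP hQ0
  rw [hQ, div_le_iff₀ h4d]
  calc betaG Γ ^ 2 ≤ (∑ p ∈ pr, |φ p.1 ^ 2 - φ (p.1 + unitVec p.2) ^ 2|) ^ 2 := hb2
    _ ≤ (∑ p ∈ pr, (φ p.1 - φ (p.1 + unitVec p.2)) ^ 2) *
        (∑ p ∈ pr, (φ p.1 + φ (p.1 + unitVec p.2)) ^ 2) := hCS
    _ ≤ (∑ p ∈ pr, (φ p.1 - φ (p.1 + unitVec p.2)) ^ 2) * (4 * (d:ℝ)) := hQP

end Cheeger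
section Path

open Function

variable {d : ℕ}

/-- `u` lies coordinatewise between `x` and `y`. -/
def ZBtw (x y u : Zd d) : Prop := ∀ j, min (x j) (y j) ≤ u j ∧ u j ≤ max (x j) (y j)

lemma zbtw_self_left (x y : Zd d) : ZBtw x y x := fun j => ⟨min_le_left _ _, le_max_left _ _⟩

lemma zbtw_trans {x y x' u : Zd d} (h : ZBtw x y x') (h' : ZBtw x' y u) : ZBtw x y u := by
  intro j
  have h1 := h j
  have h2 := h' j
  constructor
  · calc min (x j) (y j) ≤ min (x' j) (y j) := by omega
      _ ≤ u j := h2.1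
  · calc u j ≤ max (x' j) (y j) := h2.2
      _ ≤ max (x j) (y j) := by omega

/-- a monotone lattice path from a point of `A` to a point outside `A` must cross
the boundary of `A`, within the coordinate box spanned by the endpoints. -/
lemma path_cross (A : Finset (Zd d)) :
    ∀ n : ℕ, ∀ x y : Zd d, dist1 x y ≤ n → x ∈ A → y ∉ A →
    ∃ w : Zd d, ∃ i : Fin d, ZBtw x y w ∧ ZBtw x y (w + unitVec i) ∧
      ¬((w ∈ A) ↔ (w + unitVec i ∈ A)) := by
  intro n
  induction n with
  | zero =>
    intro x y hdist hx hy
    exfalso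
    apply hy
    have : x = y := by
      funext j
      have hj : (x j - y j).natAbs = 0 := by
        have : (∑ i, (x i - y i).natAbs) = 0 := le_antisymm hdist (Nat.zero_le _)
        exact Finset.sum_eq_zero_iff.1 this j (Finset.mem_univ j)
      omega
    rwa [← this]
  | succ n IH =>
    intro x y hdist hx hy
    have hxy : x ≠ y := fun h => hy (h ▸ hx)
    have hj : ∃ j, x j ≠ y j := by
      by_contra h
      push_neg at h
      exact hxy (funext h)
    obtain ⟨j, hjne⟩ := hj
    by_cases hlt : x j < y j
    · set x' : Zd d := x + unitVec j with hx'
      have hx'co : ∀ k, x' k = x k + if k = j then 1 else 0 := fun k => rfl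
      have hdist' : dist1 x' y ≤ n := by
        have e1 : dist1 x y = (x j - y j).natAbs + ∑ k ∈ Finset.univ.erase j,
            (x k - y k).natAbs := by
          rw [dist1, ← Finset.add_sum_erase _ _ (Finset.mem_univ j)]
        have e2 : dist1 x' y = (x' j - y j).natAbs + ∑ k ∈ Finset.univ.erase j,
            (x' k - y k).natAbs := by
          rw [dist1, ← Finset.add_sum_erase _ _ (Finset.mem_univ j)]
        have e3 : (∑ k ∈ Finset.univ.erase j, (x' k - y k).natAbs) =
            ∑ k ∈ Finset.univ.erase j, (x k - y k).natAbs := by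
          apply Finset.sum_congr rfl
          intro k hk
          have : k ≠ j := (Finset.mem_erase.1 hk).1
          rw [hx'co k, if_neg this, add_zero]
        have e4 : x' j = x j + 1 := by rw [hx'co j, if_pos rfl]
        have e5 : (x' j - y j).natAbs + 1 = (x j - y j).natAbs := by
          rw [e4]; omega
        omega
      have hbtwx' : ZBtw x y x' := by
        intro k
        rw [hx'co k]
        split <;> rename_i h
        · subst h; omega
        · omega
      by_cases hx'A : x' ∈ A
      · obtain ⟨w, i, h1, h2, h3⟩ := IH x' y hdist' hx'A hy
        exact ⟨w, i, zbtw_trans hbtwx' h1, zbtw_trans hbtwx' h2, h3⟩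
      · refine ⟨x, j, zbtw_self_left x y, hbtwx', ?_⟩
        rw [← hx']
        simp [hx, hx'A]
    · have hgt : y j < x j := by omega
      set x' : Zd d := x - unitVec j with hx'
      have hx'co : ∀ k, x' k = x k - if k = j then 1 else 0 := fun k => rfl
      have hdist' : dist1 x' y ≤ n := by
        have e1 : dist1 x y = (x j - y j).natAbs + ∑ k ∈ Finset.univ.erase j,
            (x k - y k).natAbs := by
          rw [dist1, ← Finset.add_sum_erase _ _ (Finset.mem_univ j)]
        have e2 : dist1 x' y = (x' j - y j).natAbs + ∑ k ∈ Finset.univ.erase j,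
            (x' k - y k).natAbs := by
          rw [dist1, ← Finset.add_sum_erase _ _ (Finset.mem_univ j)]
        have e3 : (∑ k ∈ Finset.univ.erase j, (x' k - y k).natAbs) =
            ∑ k ∈ Finset.univ.erase j, (x k - y k).natAbs := by
          apply Finset.sum_congr rfl
          intro k hk
          have : k ≠ j := (Finset.mem_erase.1 hk).1
          rw [hx'co k, if_neg this, sub_zero]
        have e4 : x' j = x j - 1 := by rw [hx'co j, if_pos rfl]
        have e5 : (x' j - y j).natAbs + 1 = (x j - y j).natAbs := by
          rw [e4]; omega
        omega
      have hbtwx' : ZBtw x y x' := by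
        intro k
        rw [hx'co k]
        split <;> rename_i h
        · subst h; omega
        · omega
      by_cases hx'A : x' ∈ A
      · obtain ⟨w, i, h1, h2, h3⟩ := IH x' y hdist' hx'A hy
        exact ⟨w, i, zbtw_trans hbtwx' h1, zbtw_trans hbtwx' h2, h3⟩
      · refine ⟨x', j, hbtwx', ?_, ?_⟩
        · rw [hx', sub_add_unitVec]
          exact zbtw_self_left x y
        · rw [hx', sub_add_unitVec]
          simp [hx]; exact hx'A

end Path
section Isoper

open Function

variable {d : ℕ}

lemma ediv_eq_of_between {K : ℕ} (hK : 0 < K) (a z : ℤ)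
    (h1 : (K:ℤ) * z ≤ a) (h2 : a < (K:ℤ) * z + K) : a / (K:ℤ) = z := by
  have hK0 : (K:ℤ) ≠ 0 := by exact_mod_cast hK.ne'
  have e : a = (a - (K:ℤ) * z) + z * K := by ring
  rw [e, Int.add_mul_ediv_right _ _ hK0,
    Int.ediv_eq_zero_of_lt (by omega) (by omega), zero_add]

lemma ediv_between {K : ℕ} (hK : 0 < K) (a : ℤ) :
    (K:ℤ) * (a / K) ≤ a ∧ a < (K:ℤ) * (a / K) + K := by
  have h1 := Int.mul_ediv_add_emod a (K:ℤ)
  have h2 := Int.emod_nonneg a (by exact_mod_cast hK.ne' : (K:ℤ) ≠ 0)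
  have h3 := Int.emod_lt_of_pos a (by exact_mod_cast hK : (0:ℤ) < K)
  omega

/-- the tiling map: `τ y` is the index of the size-`K` tile containing `y`. -/
def tileIdx (K : ℕ) (y : Zd d) : Zd d := fun i => (y i + ((K-1)/2 : ℕ)) / (K:ℤ)

lemma tileIdx_eq_iff {K : ℕ} (hK : 0 < K) (y : Zd d) (z : Zd d) :
    tileIdx K y = z ↔ ∀ i, (K:ℤ) * z i ≤ y i + ((K-1)/2 : ℕ) ∧
      y i + ((K-1)/2 : ℕ) < (K:ℤ) * z i + K := by
  constructor
  · intro h i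
    have := congrFun h i
    rw [← this]
    exact ediv_between hK _
  · intro h
    funext i
    exact ediv_eq_of_between hK _ _ (h i).1 (h i).2

lemma tileIdx_of_Lam0 {K : ℕ} (hK : 0 < K) (z : Zd d) (γ : Zd d)
    (hγ : γ ∈ Lam0 K (fun i => (K:ℤ) * z i)) : tileIdx K γ = z := by
  rw [tileIdx_eq_iff hK]
  intro i
  have h2 := hγ i
  simp only [] at h2
  omega

lemma tileIdx_btw {K : ℕ} (hK : 0 < K) {x γ u : Zd d} {z : Zd d}
    (hx : tileIdx K x = z) (hγ : tileIdx K γ = z) (hu : ZBtw x γ u) :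
    tileIdx K u = z := by
  rw [tileIdx_eq_iff hK] at hx hγ ⊢
  intro i
  have h1 := hx i
  have h2 := hγ i
  have h3 := hu i
  omega

/-- fibers of the tile map have at most `K^d` elements. -/
lemma fiber_card_le {K : ℕ} (hK : 0 < K) (A : Finset (Zd d)) (z : Zd d) :
    (A.filter fun x => tileIdx K x = z).card ≤ K ^ d := by
  classical
  have hsub : (A.filter fun x => tileIdx K x = z) ⊆
      Fintype.piFinset (fun i => Finset.Icc ((K:ℤ) * z i - ((K-1)/2 : ℕ))
        ((K:ℤ) * z i + (K:ℤ) - 1 - ((K-1)/2 : ℕ))) := by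
    intro x hx
    obtain ⟨-, hx2⟩ := Finset.mem_filter.1 hx
    rw [tileIdx_eq_iff hK] at hx2
    rw [Fintype.mem_piFinset]
    intro i
    have := hx2 i
    rw [Finset.mem_Icc]
    omega
  calc (A.filter fun x => tileIdx K x = z).card
      ≤ _ := Finset.card_le_card hsub
    _ = ∏ i : Fin d, ((Finset.Icc ((K:ℤ) * z i - ((K-1)/2 : ℕ))
        ((K:ℤ) * z i + (K:ℤ) - 1 - ((K-1)/2 : ℕ))).card) := Fintype.card_piFinset _
    _ = K ^ d := by
      have : ∀ i : Fin d, (Finset.Icc ((K:ℤ) * z i - ((K-1)/2 : ℕ))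
          ((K:ℤ) * z i + (K:ℤ) - 1 - ((K-1)/2 : ℕ))).card = K := by
        intro i
        rw [Int.card_Icc]
        have : ((K:ℤ) * z i + (K:ℤ) - 1 - ((K-1)/2 : ℕ)) + 1 - ((K:ℤ) * z i - ((K-1)/2 : ℕ))
            = (K:ℤ) := by ring
        rw [this]
        simp
      rw [Finset.prod_congr rfl fun i _ => this i, Finset.prod_const, Finset.card_univ,
        Fintype.card_fin]

/-- isoperimetric bound: `|A| ≤ K^d ⟨χ_A, -Δ χ_A⟩` for `A ⊆ Γᶜ`. -/
lemma isoper {K Q : ℕ} (hd : 0 < d) (hK : 0 < K) (hQ : 0 < Q) (Γ : Set (Zd d))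
    (hΓ : RelDense Γ K Q) (A : Finset (Zd d)) (hsub : (↑A : Set (Zd d)) ⊆ Γᶜ) :
    (A.card : ℝ) ≤ (K:ℝ) ^ d * qform A := by
  classical
  set τ : Zd d → Zd d := tileIdx K with hτ
  set F : Finset (Zd d × Fin d) := (nbhd A ×ˢ Finset.univ).filter
    (fun p => ¬((p.1 ∈ A) ↔ (p.1 + unitVec p.2 ∈ A))) with hF
  -- qform A = F.card
  have hqf : qform A = F.card := by
    rw [qform_eq_sum A, ← Finset.sum_product']
    have hval : ∀ p ∈ nbhd A ×ˢ (Finset.univ : Finset (Fin d)),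
        ((chi (↑A : Set (Zd d)) p.1 - chi ↑A (p.1 + unitVec p.2)) ^ 2 : ℝ) =
        if ¬((p.1 ∈ A) ↔ (p.1 + unitVec p.2 ∈ A)) then 1 else 0 := by
      intro p _
      by_cases h1 : p.1 ∈ A <;> by_cases h2 : p.1 + unitVec p.2 ∈ A
      · rw [chi_mem (Finset.mem_coe.2 h1), chi_mem (Finset.mem_coe.2 h2)]
        simp [h1, h2]
      · rw [chi_mem (Finset.mem_coe.2 h1), chi_not_mem (fun h => h2 (Finset.mem_coe.1 h))]
        simp [h1, h2]
      · rw [chi_not_mem (fun h => h1 (Finset.mem_coe.1 h)), chi_mem (Finset.mem_coe.2 h2)]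
        simp [h1, h2]
      · rw [chi_not_mem (fun h => h1 (Finset.mem_coe.1 h)),
          chi_not_mem (fun h => h2 (Finset.mem_coe.1 h))]
        simp [h1, h2]
    rw [Finset.sum_congr rfl hval, Finset.sum_ite, Finset.sum_const, Finset.sum_const]
    simp [hF]
  -- each tile index hit by A yields a crossing pair
  have hmap : ∀ z ∈ A.image τ, ∃ p : Zd d × Fin d, p ∈ F ∧
      τ (if p.1 ∈ A then p.1 else p.1 + unitVec p.2) = z := by
    intro z hz
    obtain ⟨x, hxA, hxz⟩ := Finset.mem_image.1 hz
    have hne : (Γ ∩ Lam0 K (fun i => (K:ℤ) * z i)).Nonempty := by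
      apply Set.nonempty_of_ncard_ne_zero
      have := hΓ z
      omega
    obtain ⟨γ, hγΓ, hγL⟩ := hne
    have hγA : γ ∉ A := fun h => (hsub (Finset.mem_coe.2 h)) hγΓ
    have hτγ : τ γ = z := tileIdx_of_Lam0 hK z γ hγL
    obtain ⟨w, i, hb1, hb2, hcross⟩ := path_cross A (dist1 x γ) x γ le_rfl hxA hγA
    refine ⟨(w, i), ?_, ?_⟩
    · rw [hF, Finset.mem_filter]
      refine ⟨Finset.mem_product.2 ⟨?_, Finset.mem_univ i⟩, hcross⟩
      by_cases hw : w ∈ A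
      · exact mem_nbhd_self hw
      · have : w + unitVec i ∈ A := by tauto
        exact mem_nbhd_of_add i this
    · by_cases hw : w ∈ A
      · rw [if_pos hw]
        exact tileIdx_btw hK hxz hτγ hb1
      · rw [if_neg hw]
        exact tileIdx_btw hK hxz hτγ hb2
  -- injection: tile indices ↪ crossing pairs
  have hinj : (A.image τ).card ≤ F.card := by
    choose f hf1 hf2 using hmap
    have hd' : Nonempty (Fin d) := ⟨⟨0, hd⟩⟩
    set g : Zd d → Zd d × Fin d := fun z =>
      if h : z ∈ A.image τ then f z h else ((fun _ => 0), Classical.arbitrary (Fin d)) with hg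
    apply Finset.card_le_card_of_injOn g
    · intro z hz
      rw [hg]; simp only [dif_pos hz]
      rw [dif_pos (show z ∈ A.image τ from hz)]; exact hf1 z hz
    · intro z1 hz1 z2 hz2 heq
      simp only [Finset.mem_coe] at hz1 hz2
      rw [hg] at heq
      simp only [dif_pos hz1, dif_pos hz2] at heq
      rw [← hf2 z1 hz1, ← hf2 z2 hz2, heq]
  -- counting
  have hcount : A.card ≤ K ^ d * (A.image τ).card :=
    Finset.card_le_mul_card_image A (K ^ d) (fun b _ => fiber_card_le hK A b)
  have : A.card ≤ K ^ d * F.card := hcount.trans (Nat.mul_le_mul_left _ hinj)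
  calc (A.card : ℝ) ≤ ((K ^ d * F.card : ℕ) : ℝ) := by exact_mod_cast this
    _ = (K:ℝ) ^ d * qform A := by rw [hqf]; push_cast; ring

end Isoper
section Main

open Function

lemma Kstar_pos (K : ℕ) (hK : 0 < K) : 0 < Kstar K := by
  unfold Kstar; split <;> omega

lemma le_Kstar (K : ℕ) : K ≤ Kstar K := by
  unfold Kstar; split <;> omega

/-- Cheeger bound `E_Γ(-Δ) ≥ β(Γ)²/(4d) ≥ 1/(4d K_*^{2d})`. -/
theorem stmt15 (d K Q : ℕ) (hd : 0 < d) (hK : 0 < K) (hQ : 0 < Q)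
    (Γ : Set (Zd d)) (hne : Γ ≠ Set.univ) (hΓ : RelDense Γ K Q) :
    betaG Γ ^ 2 / (4 * d) ≤ EG (fun _ => 0) Γ ∧
    1 / (4 * (d : ℝ) * (Kstar K : ℝ) ^ (2 * d)) ≤ betaG Γ ^ 2 / (4 * d) := by
  classical
  obtain ⟨x₀, hx₀⟩ := Set.ne_univ_iff_exists_notMem Γ |>.1 hne
  have hKs : (0:ℝ) < (Kstar K : ℝ) ^ d := by
    have := Kstar_pos K hK
    positivity
  have hKpow : (K:ℝ) ^ d ≤ (Kstar K : ℝ) ^ d := by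
    apply pow_le_pow_left₀ (by positivity)
    exact_mod_cast le_Kstar K
  -- β(Γ) ≥ 1/K_*^d
  have hbeta : 1 / ((Kstar K : ℝ) ^ d) ≤ betaG Γ := by
    apply le_csInf
    · refine ⟨qform {x₀} / ({x₀} : Finset (Zd d)).card, {x₀},
        Finset.singleton_nonempty x₀, ?_, rfl⟩
      intro y hy
      have : y = x₀ := by simpa using hy
      rwa [this]
    · rintro r ⟨A, hAne, hAsub, rfl⟩
      have hiso := isoper hd hK hQ Γ hΓ A hAsub
      have hq0 := qform_nonneg A
      have hcardpos : (0:ℝ) < A.card := by exact_mod_cast Finset.card_pos.2 hAne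
      rw [div_le_div_iff₀ hKs hcardpos]
      calc (1:ℝ) * A.card = (A.card : ℝ) := by ring
        _ ≤ (K:ℝ) ^ d * qform A := hiso
        _ ≤ (Kstar K : ℝ) ^ d * qform A := mul_le_mul_of_nonneg_right hKpow hq0
        _ = qform A * (Kstar K : ℝ) ^ d := by ring
  have hbnn : 0 ≤ betaG Γ := le_trans (by positivity) hbeta
  constructor
  · -- Cheeger bound
    apply le_csInf
    · -- the normalized delta function at x₀ is admissible
      set φ₀ : Zd d → ℝ := fun x => if x = x₀ then 1 else 0 with hφ₀
      have hsupp : support φ₀ ⊆ {x₀} := by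
        intro x hx
        simp only [mem_support, hφ₀] at hx
        by_contra h
        exact hx (if_neg (by simpa using h))
      have hfin : (support φ₀).Finite := (Set.finite_singleton x₀).subset hsupp
      have hvan : ∀ x ∈ Γ, φ₀ x = 0 := by
        intro x hx
        rw [hφ₀]
        simp only []
        rw [if_neg (fun h : x = x₀ => hx₀ (h ▸ hx))]
      have hnorm : norm2 φ₀ = 1 := by
        unfold norm2
        rw [finsum_eq_sum_of_support_subset (f := fun x => φ₀ x ^ 2) (s := {x₀})
          (fun x hx => by
            by_contra h
            apply hx
            show φ₀ x ^ 2 = 0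
            rw [hφ₀]
            simp only []
            rw [if_neg (by simpa using h)]
            ring)]
        simp [hφ₀]
      exact ⟨energy (fun _ => 0) φ₀, φ₀, hfin, hvan, hnorm, rfl⟩
    · rintro r ⟨φ, hfin, hvan, hnorm, rfl⟩
      exact cheeger_bound Γ hd hbnn φ hfin hvan hnorm
  · -- numerical bound
    have h4d : (0:ℝ) < 4 * (d:ℝ) := by positivity
    have h1 : (1 / ((Kstar K : ℝ) ^ d)) ^ 2 ≤ betaG Γ ^ 2 :=
      pow_le_pow_left₀ (by positivity) hbeta 2
    have h2 : 1 / (4 * (d : ℝ) * (Kstar K : ℝ) ^ (2 * d)) =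
        (1 / ((Kstar K : ℝ) ^ d)) ^ 2 / (4 * (d:ℝ)) := by
      have e : (Kstar K : ℝ) ^ (2 * d) = ((Kstar K : ℝ) ^ d) ^ 2 := by
        rw [mul_comm, pow_mul]
      rw [e]
      field_simp
    rw [h2]
    exact (div_le_div_iff_of_pos_right h4d).2 h1
end Main
end
end

section
/- Let Γ ⊊ Z^d be (K,Q)-relatively dense. Then for t ≥ 2d - 1, the ground state energy satisfies E_Γ(-Δ, t) = inf σ(-Δ + t χ_Γ) ≥ (min{β(Γ),1})²/(6d - 1) ≥ 1/((6d-1) K_*^{2d}). -/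
open scoped BigOperators

noncomputable section

namespace StmtAux

variable {d : ℕ}

lemma chi_mem {A : Set (Zd d)} {x : Zd d} (h : x ∈ A) : chi A x = 1 :=
  Set.indicator_of_mem h _

lemma chi_not_mem {A : Set (Zd d)} {x : Zd d} (h : x ∉ A) : chi A x = 0 :=
  Set.indicator_of_notMem h _

lemma chi_nonneg (A : Set (Zd d)) (x : Zd d) : 0 ≤ chi A x := by
  by_cases h : x ∈ A
  · rw [chi_mem h]; norm_num
  · rw [chi_not_mem h]

lemma chi_le_one (A : Set (Zd d)) (x : Zd d) : chi A x ≤ 1 := by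
  by_cases h : x ∈ A
  · rw [chi_mem h]
  · rw [chi_not_mem h]; norm_num

/-- shift-invariance of finsum -/
lemma finsum_shift (f : Zd d → ℝ) (c : Zd d) : ∑ᶠ x, f (x + c) = ∑ᶠ x, f x :=
  finsum_comp_equiv (Equiv.addRight c) (f := f)

lemma support_shift_finite {φ : Zd d → ℝ} (hφ : (Function.support φ).Finite) (c : Zd d) :
    (Function.support fun x => φ (x + c)).Finite := by
  have : (Function.support fun x => φ (x + c)) = (Equiv.addRight c) ⁻¹' (Function.support φ) := by
    ext x; simp [Function.mem_support]
  rw [this]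
  exact hφ.preimage (Equiv.injective _).injOn

lemma support_edge_finite {φ : Zd d → ℝ} (hφ : (Function.support φ).Finite) (c : Zd d)
    (F : ℝ → ℝ → ℝ) (hF : F 0 0 = 0) :
    (Function.support fun x => F (φ x) (φ (x + c))).Finite := by
  apply (hφ.union (support_shift_finite hφ c)).subset
  intro x hx
  simp only [Function.mem_support] at hx
  by_contra h
  simp only [Set.mem_union, Function.mem_support, ne_eq, not_or, not_not] at h
  exact hx (by rw [h.1, h.2, hF])

/-- summation by parts -/
lemma sbp (φ : Zd d → ℝ) (hφ : (Function.support φ).Finite) :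
    ∑ᶠ x, φ x * negLap φ x = ∑ i, ∑ᶠ x, (φ x - φ (x + unitVec i)) ^ 2 := by
  classical
  set S := hφ.toFinset with hS
  have hsupp : Function.support φ ⊆ (S : Set (Zd d)) := by
    intro x hx; simpa [hS] using hx
  -- convert LHS to a Finset sum over S
  have h1 : ∑ᶠ x, φ x * negLap φ x = ∑ x ∈ S, φ x * negLap φ x := by
    apply finsum_eq_sum_of_support_subset
    intro x hx
    apply hsupp
    intro hx0
    simp [Function.mem_support, hx0] at hx
  rw [h1]
  have h2 : ∑ x ∈ S, φ x * negLap φ x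
      = ∑ i, ∑ x ∈ S, (φ x * (φ x - φ (x + unitVec i)) + φ x * (φ x - φ (x - unitVec i))) := by
    rw [Finset.sum_comm]
    apply Finset.sum_congr rfl
    intro x _
    simp [negLap, Finset.mul_sum, mul_add]
  rw [h2]
  apply Finset.sum_congr rfl
  intro i _
  -- per direction i
  have hA : ∑ x ∈ S, φ x * (φ x - φ (x + unitVec i))
      = ∑ᶠ x, φ x * (φ x - φ (x + unitVec i)) := by
    symm; apply finsum_eq_sum_of_support_subset
    intro x hx
    apply hsupp
    intro hx0
    simp [Function.mem_support, hx0] at hx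
  have hB : ∑ x ∈ S, φ x * (φ x - φ (x - unitVec i))
      = ∑ᶠ x, φ x * (φ x - φ (x - unitVec i)) := by
    symm; apply finsum_eq_sum_of_support_subset
    intro x hx
    apply hsupp
    intro hx0
    simp [Function.mem_support, hx0] at hx
  rw [Finset.sum_add_distrib, hA, hB]
  have hshift : ∑ᶠ x, φ x * (φ x - φ (x - unitVec i))
      = ∑ᶠ x, φ (x + unitVec i) * (φ (x + unitVec i) - φ x) := by
    rw [← finsum_shift (fun x => φ x * (φ x - φ (x - unitVec i))) (unitVec i)]
    apply finsum_congr
    intro x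
    simp
  rw [hshift]
  have hfin1 : (Function.support fun x => φ x * (φ x - φ (x + unitVec i))).Finite := by
    apply hφ.subset
    intro x hx
    simp only [Function.mem_support] at hx ⊢
    intro h0; apply hx; rw [h0]; ring
  have hfin2 : (Function.support fun x => φ (x + unitVec i) * (φ (x + unitVec i) - φ x)).Finite := by
    apply (support_shift_finite hφ (unitVec i)).subset
    intro x hx
    simp only [Function.mem_support] at hx ⊢
    intro h0; apply hx; rw [h0]; ring
  rw [← finsum_add_distrib hfin1 hfin2]
  apply finsum_congr
  intro x
  ring

lemma energy_eq (V : Zd d → ℝ) (φ : Zd d → ℝ) (hφ : (Function.support φ).Finite) :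
    energy V φ = (∑ i, ∑ᶠ x, (φ x - φ (x + unitVec i)) ^ 2) + ∑ᶠ x, V x * φ x ^ 2 := by
  have hfin1 : (Function.support fun x => φ x * negLap φ x).Finite := by
    apply hφ.subset
    intro x hx
    simp only [Function.mem_support] at hx ⊢
    intro h0; apply hx; rw [h0]; ring
  have hfin2 : (Function.support fun x => V x * φ x ^ 2).Finite := by
    apply hφ.subset
    intro x hx
    simp only [Function.mem_support] at hx ⊢
    intro h0; apply hx; rw [h0]; ring
  have h : energy V φ = ∑ᶠ x, (φ x * negLap φ x + V x * φ x ^ 2) := by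
    rw [energy]; apply finsum_congr; intro x; ring
  rw [h, finsum_add_distrib hfin1 hfin2, sbp φ hφ]

lemma support_chi_finite (A : Finset (Zd d)) : (Function.support (chi (↑A : Set (Zd d)))).Finite := by
  apply A.finite_toSet.subset
  intro x hx
  simp only [Function.mem_support] at hx
  by_contra h
  exact hx (chi_not_mem h)

lemma qform_eq (A : Finset (Zd d)) :
    qform A = ∑ i, ∑ᶠ x, (chi (↑A : Set (Zd d)) x - chi (↑A : Set (Zd d)) (x + unitVec i)) ^ 2 := by
  classical
  rw [← sbp _ (support_chi_finite A)]
  rw [qform]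
  have h1 : ∑ᶠ x, chi (↑A : Set (Zd d)) x * negLap (chi ↑A) x
      = ∑ x ∈ A, chi (↑A : Set (Zd d)) x * negLap (chi ↑A) x := by
    apply finsum_eq_sum_of_support_subset
    intro x hx
    simp only [Function.mem_support] at hx
    by_contra h
    exact hx (by rw [chi_not_mem (by simpa using h)]; ring)
  rw [h1]
  apply Finset.sum_congr rfl
  intro x hx
  rw [chi_mem (by simpa using hx), one_mul]

lemma qform_nonneg (A : Finset (Zd d)) : 0 ≤ qform A := by
  rw [qform_eq]
  apply Finset.sum_nonneg
  intro i _
  exact finsum_nonneg fun x => sq_nonneg _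

lemma betaG_le {Γ : Set (Zd d)} {A : Finset (Zd d)} (hA : A.Nonempty)
    (hsub : (↑A : Set (Zd d)) ⊆ Γᶜ) : betaG Γ ≤ qform A / A.card := by
  apply csInf_le
  · refine ⟨0, ?_⟩
    rintro r ⟨B, hB, _, rfl⟩
    exact div_nonneg (qform_nonneg B) (by positivity)
  · exact ⟨A, hA, hsub, rfl⟩

lemma qform_ge {Γ : Set (Zd d)} {m : ℝ} (hm : m ≤ betaG Γ) {A : Finset (Zd d)} (hA : A.Nonempty)
    (hsub : (↑A : Set (Zd d)) ⊆ Γᶜ) : m * A.card ≤ qform A := by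
  have hc : (0:ℝ) < A.card := by exact_mod_cast Finset.card_pos.2 hA
  have := (betaG_le hA hsub).trans' hm
  calc m * A.card ≤ (qform A / A.card) * A.card := by
        apply mul_le_mul_of_nonneg_right this hc.le
    _ = qform A := by field_simp

/-- discrete co-area / Cheeger lower bound for nonnegative functions vanishing on Γ -/
lemma coarea {Γ : Set (Zd d)} {m : ℝ} (hm0 : 0 ≤ m)
    (hq : ∀ A : Finset (Zd d), A.Nonempty → (↑A : Set (Zd d)) ⊆ Γᶜ → m * A.card ≤ qform A) :
    ∀ (k : ℕ) (g : Zd d → ℝ) (hg : (Function.support g).Finite), (∀ x, 0 ≤ g x) →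
      (∀ x ∈ Γ, g x = 0) → (hg.toFinset.image g).card ≤ k →
      m * ∑ᶠ x, g x ≤ ∑ i, ∑ᶠ x, |g x - g (x + unitVec i)| := by
  classical
  intro k
  induction k with
  | zero =>
      intro g hg hg0 hgΓ hcard
      have : hg.toFinset = ∅ := by
        by_contra h
        obtain ⟨x, hx⟩ := Finset.nonempty_of_ne_empty h
        have : g x ∈ hg.toFinset.image g := Finset.mem_image_of_mem g hx
        have := Finset.card_pos.2 ⟨_, this⟩
        omega
      have hg0' : ∀ x, g x = 0 := by
        intro x
        by_contra h
        have hx : x ∈ hg.toFinset := by simp [Function.mem_support, h]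
        rw [this] at hx
        simp at hx
      simp [hg0']
  | succ k ih =>
      intro g hg hg0 hgΓ hcard
      by_cases hne : hg.toFinset = ∅
      · have hg0' : ∀ x, g x = 0 := by
          intro x
          by_contra h
          have hx : x ∈ hg.toFinset := by simp [Function.mem_support, h]
          rw [hne] at hx
          exact absurd hx (by simp)
        simp [hg0']
      · set A := hg.toFinset with hAdef
        have hAne : A.Nonempty := Finset.nonempty_of_ne_empty hne
        have hsupp : Function.support g = (A : Set (Zd d)) := by
          simp [hAdef]
        have hAsub : (↑A : Set (Zd d)) ⊆ Γᶜ := by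
          intro x hx
          simp only [Set.mem_compl_iff]
          intro hxΓ
          rw [← hsupp] at hx
          exact hx (hgΓ x hxΓ)
        have hgA : ∀ x, x ∉ A → g x = 0 := by
          intro x hx
          by_contra h
          exact hx (by rw [hAdef]; simp [Function.mem_support, h])
        set v := (A.image g).min' (hAne.image g) with hvdef
        have hvmem : v ∈ A.image g := Finset.min'_mem _ _
        have hvle : ∀ x ∈ A, v ≤ g x := fun x hx =>
          Finset.min'_le _ _ (Finset.mem_image_of_mem g hx)
        have hvpos : 0 < v := by
          obtain ⟨x0, hx0, hx0v⟩ := Finset.mem_image.1 hvmem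
          have : g x0 ≠ 0 := by
            have : x0 ∈ Function.support g := by rw [hsupp]; exact_mod_cast hx0
            exact this
          rw [← hx0v]
          exact lt_of_le_of_ne (hg0 x0) (Ne.symm this)
        set g' : Zd d → ℝ := fun x => g x - v * chi (↑A : Set (Zd d)) x with hg'def
        have hg'A : ∀ x, x ∉ A → g' x = 0 := by
          intro x hx
          simp only [hg'def]
          rw [hgA x hx, chi_not_mem (by simpa using hx)]
          ring
        have hg'supp : Function.support g' ⊆ (A : Set (Zd d)) := by
          intro x hx
          by_contra h
          exact hx (hg'A x (by simpa using h))
        have hg'fin : (Function.support g').Finite := (A.finite_toSet).subset hg'supp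
        have hg'0 : ∀ x, 0 ≤ g' x := by
          intro x
          by_cases hx : x ∈ A
          · simp only [hg'def]
            rw [chi_mem (by simpa using hx)]
            have := hvle x hx
            linarith
          · rw [hg'A x hx]
        have hg'Γ : ∀ x ∈ Γ, g' x = 0 := by
          intro x hx
          apply hg'A
          intro hxA
          exact (hAsub (by exact_mod_cast hxA)) hx
        -- cardinality decrease
        have hcard' : (hg'fin.toFinset.image g').card ≤ k := by
          have hsub : hg'fin.toFinset.image g' ⊆ ((A.image g).erase v).image (fun t => t - v) := by
            intro t ht
            obtain ⟨x, hx, rfl⟩ := Finset.mem_image.1 ht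
            have hxA : x ∈ A := by
              have : x ∈ Function.support g' := by simpa using hx
              exact_mod_cast hg'supp this
            have hx0 : g' x ≠ 0 := by simpa [Function.mem_support] using hx
            have hgx : g' x = g x - v := by
              simp only [hg'def]; rw [chi_mem (by simpa using hxA)]; ring
            apply Finset.mem_image.2
            refine ⟨g x, ?_, by rw [hgx]⟩
            apply Finset.mem_erase.2
            constructor
            · intro h; apply hx0; rw [hgx, h]; ring
            · exact Finset.mem_image_of_mem g hxA
          calc (hg'fin.toFinset.image g').card
              ≤ (((A.image g).erase v).image (fun t => t - v)).card := Finset.card_le_card hsub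
            _ ≤ ((A.image g).erase v).card := Finset.card_image_le
            _ = (A.image g).card - 1 := Finset.card_erase_of_mem hvmem
            _ ≤ k := by omega
        have IH := ih g' hg'fin hg'0 hg'Γ hcard'
        -- sum identity
        have hsum : ∑ᶠ x, g x = (∑ᶠ x, g' x) + v * A.card := by
          have e1 : ∑ᶠ x, g x = ∑ x ∈ A, g x :=
            finsum_eq_sum_of_support_subset _ (by rw [hsupp])
          have e2 : ∑ᶠ x, g' x = ∑ x ∈ A, g' x :=
            finsum_eq_sum_of_support_subset _ hg'supp
          have e3 : ∀ x ∈ A, g x = g' x + v := by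
            intro x hx
            simp only [hg'def]
            rw [chi_mem (by simpa using hx)]
            ring
          rw [e1, e2, Finset.sum_congr rfl e3, Finset.sum_add_distrib, Finset.sum_const,
            nsmul_eq_mul]
          ring
        -- edge identity
        have hedge : ∀ i : Fin d, ∑ᶠ x, |g x - g (x + unitVec i)|
            = (∑ᶠ x, |g' x - g' (x + unitVec i)|)
              + v * ∑ᶠ x, (chi (↑A : Set (Zd d)) x - chi (↑A : Set (Zd d)) (x + unitVec i)) ^ 2 := by
          intro i
          have hpt : ∀ x, |g x - g (x + unitVec i)|
              = |g' x - g' (x + unitVec i)|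
                + v * (chi (↑A : Set (Zd d)) x - chi (↑A : Set (Zd d)) (x + unitVec i)) ^ 2 := by
            intro x
            set y := x + unitVec i with hy
            by_cases hx : x ∈ A <;> by_cases hyA : y ∈ A
            · have gx : g' x = g x - v := by
                simp only [hg'def]; rw [chi_mem (by simpa using hx)]; ring
              have gy : g' y = g y - v := by
                simp only [hg'def]; rw [chi_mem (by simpa using hyA)]; ring
              rw [gx, gy, chi_mem (by simpa using hx), chi_mem (by simpa using hyA)]
              ring_nf
            · have gx : g' x = g x - v := by
                simp only [hg'def]; rw [chi_mem (by simpa using hx)]; ring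
              rw [gx, hgA y hyA, hg'A y hyA, chi_mem (by simpa using hx),
                chi_not_mem (by simpa using hyA)]
              have h1 : v ≤ g x := hvle x hx
              rw [abs_of_nonneg (by linarith), abs_of_nonneg (by linarith)]
              ring
            · have gy : g' y = g y - v := by
                simp only [hg'def]; rw [chi_mem (by simpa using hyA)]; ring
              rw [gy, hgA x hx, hg'A x hx, chi_not_mem (by simpa using hx),
                chi_mem (by simpa using hyA)]
              have h1 : v ≤ g y := hvle y hyA
              rw [abs_of_nonpos (by linarith), abs_of_nonpos (by linarith)]
              ring
            · rw [hgA x hx, hgA y hyA, hg'A x hx, hg'A y hyA, chi_not_mem (by simpa using hx),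
                chi_not_mem (by simpa using hyA)]
              simp
          have hfin1 : (Function.support fun x => |g' x - g' (x + unitVec i)|).Finite :=
            support_edge_finite hg'fin (unitVec i) (fun a b => |a - b|) (by simp)
          have hfin2 : (Function.support fun x =>
              v * (chi (↑A : Set (Zd d)) x - chi (↑A : Set (Zd d)) (x + unitVec i)) ^ 2).Finite :=
            support_edge_finite (support_chi_finite A) (unitVec i)
              (fun a b => v * (a - b) ^ 2) (by simp)
          calc ∑ᶠ x, |g x - g (x + unitVec i)|
              = ∑ᶠ x, (|g' x - g' (x + unitVec i)|
                + v * (chi (↑A : Set (Zd d)) x - chi (↑A : Set (Zd d)) (x + unitVec i)) ^ 2) :=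
                finsum_congr hpt
            _ = (∑ᶠ x, |g' x - g' (x + unitVec i)|)
                + ∑ᶠ x, v * (chi (↑A : Set (Zd d)) x - chi (↑A : Set (Zd d)) (x + unitVec i)) ^ 2 :=
                finsum_add_distrib hfin1 hfin2
            _ = (∑ᶠ x, |g' x - g' (x + unitVec i)|)
                + v * ∑ᶠ x, (chi (↑A : Set (Zd d)) x - chi (↑A : Set (Zd d)) (x + unitVec i)) ^ 2 := by
                rw [mul_finsum _ _]
        calc m * ∑ᶠ x, g x = m * ∑ᶠ x, g' x + (m * A.card) * v := by rw [hsum]; ring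
          _ ≤ (∑ i, ∑ᶠ x, |g' x - g' (x + unitVec i)|) + qform A * v := by
              apply add_le_add IH
              apply mul_le_mul_of_nonneg_right (hq A hAne hAsub) hvpos.le
          _ = ∑ i, ((∑ᶠ x, |g' x - g' (x + unitVec i)|)
                + v * ∑ᶠ x, (chi (↑A : Set (Zd d)) x - chi (↑A : Set (Zd d)) (x + unitVec i)) ^ 2) := by
              rw [qform_eq, Finset.sum_mul, Finset.sum_add_distrib]
              congr 1
              exact Finset.sum_congr rfl (fun i _ => mul_comm _ _)
          _ = ∑ i, ∑ᶠ x, |g x - g (x + unitVec i)| := by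
              apply Finset.sum_congr rfl
              intro i _
              rw [hedge i]

/-- the elementary inequality behind the Cheeger bound -/
lemma alg {dd m D s : ℝ} (hdd : dd = 1 ∨ 2 ≤ dd) (hm0 : 0 < m) (hm1 : m ≤ 1)
    (hD : 0 ≤ D) (hs0 : 0 ≤ s)
    (hkey : m * (1 - s) ≤ 2 * Real.sqrt (dd * D) + 2 * dd * s) :
    m ^ 2 / (6 * dd - 1) ≤ D + (2 * dd - 1) * s := by
  have hdd1 : (1:ℝ) ≤ dd := by rcases hdd with h | h <;> linarith
  have h6 : (0:ℝ) < 6 * dd - 1 := by linarith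
  set a : ℝ := m + 2 * dd with ha
  have ha0 : 0 < a := by positivity
  rw [div_le_iff₀ h6]
  by_cases hcase : m ≤ a * s
  · -- potential term dominates
    have h1 : m * m ≤ m * (a * s) := mul_le_mul_of_nonneg_left hcase hm0.le
    have h2 : m * a ≤ 2 * dd + 1 := by nlinarith
    have h3 : 2 * dd + 1 ≤ (2 * dd - 1) * (6 * dd - 1) := by nlinarith
    have h4 : m * (a * s) ≤ (2 * dd - 1) * (6 * dd - 1) * s := by nlinarith
    nlinarith
  · push_neg at hcase
    have hpos : 0 < m - a * s := by linarith
    have hkey2 : m - a * s ≤ 2 * Real.sqrt (dd * D) := by nlinarith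
    have hsq : (m - a * s) ^ 2 ≤ 4 * (dd * D) := by
      have h3 : (2 * Real.sqrt (dd * D)) ^ 2 = 4 * (dd * D) := by
        rw [mul_pow, Real.sq_sqrt (by positivity)]
        ring
      nlinarith [Real.sqrt_nonneg (dd * D)]
    rcases hdd with h1 | h2
    · subst h1
      -- d = 1 : tight case
      have ham : a * m ≤ 3 := by nlinarith
      have hsa : 0 ≤ a * s := by positivity
      nlinarith [sq_nonneg (4 * m - 9 * (a * s)), mul_nonneg hs0 (by nlinarith : (0:ℝ) ≤ 3 - a * m),
        mul_nonneg hsa hpos.le, mul_nonneg hs0 hpos.le, sq_nonneg (m - a * s)]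
    · -- d ≥ 2 : easy case
      have ham : a * m ≤ 2 * dd * (2 * dd - 1) := by nlinarith
      nlinarith [mul_nonneg hs0 (by nlinarith : (0:ℝ) ≤ 2 * dd * (2 * dd - 1) - a * m),
        sq_nonneg (a * s), mul_nonneg (mul_nonneg hs0 hs0) (by positivity : (0:ℝ) ≤ 6 * dd - 1)]

lemma energy_lower {Γ : Set (Zd d)} {m : ℝ} (hd : 0 < d) (hm0 : 0 < m) (hm1 : m ≤ 1)
    (hq : ∀ A : Finset (Zd d), A.Nonempty → (↑A : Set (Zd d)) ⊆ Γᶜ → m * A.card ≤ qform A)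
    {t : ℝ} (ht : 2 * (d:ℝ) - 1 ≤ t) (φ : Zd d → ℝ) (hφ : (Function.support φ).Finite)
    (hn : norm2 φ = 1) :
    m ^ 2 / (6 * (d:ℝ) - 1) ≤ energy (fun x => 0 + t * chi Γ x) φ := by
  classical
  set D : ℝ := ∑ i, ∑ᶠ x, (φ x - φ (x + unitVec i)) ^ 2 with hDdef
  set s : ℝ := ∑ᶠ x, chi Γ x * φ x ^ 2 with hsdef
  have hfin_chiφ : (Function.support fun x => chi Γ x * φ x ^ 2).Finite := by
    apply hφ.subset
    intro x hx
    simp only [Function.mem_support] at hx ⊢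
    intro h0; apply hx; rw [h0]; ring
  have hfin_g : (Function.support fun x => (1 - chi Γ x) * φ x ^ 2).Finite := by
    apply hφ.subset
    intro x hx
    simp only [Function.mem_support] at hx ⊢
    intro h0; apply hx; rw [h0]; ring
  have hfin_φ2 : (Function.support fun x => φ x ^ 2).Finite := by
    apply hφ.subset
    intro x hx
    simp only [Function.mem_support] at hx ⊢
    intro h0; apply hx; rw [h0]; ring
  -- (a) energy = D + t * s
  have hE : energy (fun x => 0 + t * chi Γ x) φ = D + t * s := by
    rw [energy_eq _ _ hφ, hDdef, hsdef]
    congr 1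
    rw [mul_finsum _ t]
    apply finsum_congr
    intro x
    ring
  -- (b,c) nonnegativity
  have hD0 : 0 ≤ D := Finset.sum_nonneg fun i _ => finsum_nonneg fun x => sq_nonneg _
  have hs0 : 0 ≤ s := finsum_nonneg fun x => mul_nonneg (chi_nonneg _ _) (sq_nonneg _)
  -- (e) mass splitting
  set g : Zd d → ℝ := fun x => (1 - chi Γ x) * φ x ^ 2 with hgdef
  have hg0 : ∀ x, 0 ≤ g x := fun x =>
    mul_nonneg (by linarith [chi_le_one Γ x]) (sq_nonneg _)
  have hgΓ : ∀ x ∈ Γ, g x = 0 := by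
    intro x hx
    simp only [hgdef]
    rw [chi_mem hx]
    ring
  have hgs : ∑ᶠ x, g x = 1 - s := by
    have h1 : ∑ᶠ x, (chi Γ x * φ x ^ 2 + g x) = s + ∑ᶠ x, g x :=
      finsum_add_distrib hfin_chiφ hfin_g
    have h2 : ∑ᶠ x, (chi Γ x * φ x ^ 2 + g x) = ∑ᶠ x, φ x ^ 2 := by
      apply finsum_congr
      intro x
      simp only [hgdef]
      ring
    rw [h2] at h1
    rw [norm2] at hn
    rw [hn] at h1
    linarith
  -- (f) coarea
  have hco : m * (1 - s) ≤ ∑ i, ∑ᶠ x, |g x - g (x + unitVec i)| := by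
    rw [← hgs]
    exact coarea hm0.le hq _ g hfin_g hg0 hgΓ le_rfl
  -- (g) Cauchy-Schwarz bound
  set S : Finset (Zd d) := hφ.toFinset with hSdef
  set B : Finset (Zd d) :=
    S ∪ Finset.univ.biUnion (fun i => S.image (fun x => x - unitVec i)) with hBdef
  have hSB : S ⊆ B := Finset.subset_union_left
  have hφB : ∀ x, x ∉ B → φ x = 0 := by
    intro x hx
    by_contra h
    exact hx (hSB (by simp [hSdef, Function.mem_support, h]))
  have hφB' : ∀ (i : Fin d) x, x ∉ B → φ (x + unitVec i) = 0 := by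
    intro i x hx
    by_contra h
    apply hx
    rw [hBdef]
    apply Finset.mem_union_right
    apply Finset.mem_biUnion.2 ⟨i, Finset.mem_univ i, ?_⟩
    apply Finset.mem_image.2 ⟨x + unitVec i, ?_, by abel⟩
    simp [hSdef, Function.mem_support, h]
  have hsuppB : ∀ (i : Fin d) (F : ℝ → ℝ → ℝ), F 0 0 = 0 →
      (Function.support fun x => F (φ x) (φ (x + unitVec i))) ⊆ (B : Set (Zd d)) := by
    intro i F hF x hx
    simp only [Function.mem_support] at hx
    by_contra h
    exact hx (by rw [hφB x (by simpa using h), hφB' i x (by simpa using h), hF])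
  have hgφ : ∀ x, φ x = 0 → g x = 0 := by
    intro x h
    simp only [hgdef]
    rw [h]
    ring
  -- pointwise edge bound
  have hpt : ∀ (i : Fin d) x, |g x - g (x + unitVec i)|
      ≤ |φ x - φ (x + unitVec i)| * (|φ x| + |φ (x + unitVec i)|)
        + chi Γ x * φ x ^ 2 + chi Γ (x + unitVec i) * φ (x + unitVec i) ^ 2 := by
    intro i x
    set y := x + unitVec i with hy
    have habs : |φ x ^ 2 - φ y ^ 2| ≤ |φ x - φ y| * (|φ x| + |φ y|) := by
      have : φ x ^ 2 - φ y ^ 2 = (φ x - φ y) * (φ x + φ y) := by ring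
      rw [this, abs_mul]
      exact mul_le_mul_of_nonneg_left (abs_add_le _ _) (abs_nonneg _)
    have h1 : φ y ^ 2 - φ x ^ 2 ≤ |φ x ^ 2 - φ y ^ 2| := by
      rw [abs_sub_comm]; exact le_abs_self _
    have h2 : φ x ^ 2 - φ y ^ 2 ≤ |φ x ^ 2 - φ y ^ 2| := le_abs_self _
    have h3 : (0:ℝ) ≤ |φ x - φ y| * (|φ x| + |φ y|) := by positivity
    by_cases hxΓ : x ∈ Γ <;> by_cases hyΓ : y ∈ Γ <;>
        simp only [hgdef, chi_mem, chi_not_mem, hxΓ, hyΓ, not_false_iff] <;> norm_num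
    · positivity
    · nlinarith
    · nlinarith
    · exact habs
  -- supports of edge integrands are inside B
  have hsupp_gedge : ∀ i : Fin d,
      (Function.support fun x => |g x - g (x + unitVec i)|) ⊆ (B : Set (Zd d)) := by
    intro i x hx
    simp only [Function.mem_support] at hx
    by_contra h
    apply hx
    rw [hgφ x (hφB x (by simpa using h)), hgφ _ (hφB' i x (by simpa using h))]
    simp
  have hsupp_D : ∀ i : Fin d,
      (Function.support fun x => (φ x - φ (x + unitVec i)) ^ 2) ⊆ (B : Set (Zd d)) :=
    fun i => hsuppB i (fun a b => (a - b) ^ 2) (by norm_num)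
  have hsupp_chi1 : (Function.support fun x => chi Γ x * φ x ^ 2) ⊆ (B : Set (Zd d)) := by
    intro x hx
    simp only [Function.mem_support] at hx
    by_contra h
    exact hx (by rw [hφB x (by simpa using h)]; ring)
  have hsupp_chi2 : ∀ i : Fin d,
      (Function.support fun x => chi Γ (x + unitVec i) * φ (x + unitVec i) ^ 2)
        ⊆ (B : Set (Zd d)) := by
    intro i x hx
    simp only [Function.mem_support] at hx
    by_contra h
    exact hx (by rw [hφB' i x (by simpa using h)]; ring)
  have hsupp_φ2 : (Function.support fun x => φ x ^ 2) ⊆ (B : Set (Zd d)) := by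
    intro x hx
    simp only [Function.mem_support] at hx
    by_contra h
    exact hx (by rw [hφB x (by simpa using h)]; ring)
  have hsupp_φ2' : ∀ i : Fin d,
      (Function.support fun x => φ (x + unitVec i) ^ 2) ⊆ (B : Set (Zd d)) := by
    intro i x hx
    simp only [Function.mem_support] at hx
    by_contra h
    exact hx (by rw [hφB' i x (by simpa using h)]; ring)
  have hBφ2 : ∑ x ∈ B, φ x ^ 2 = 1 := by
    rw [← finsum_eq_sum_of_support_subset _ hsupp_φ2]
    exact hn
  have hBφ2' : ∀ i : Fin d, ∑ x ∈ B, φ (x + unitVec i) ^ 2 = 1 := by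
    intro i
    rw [← finsum_eq_sum_of_support_subset _ (hsupp_φ2' i)]
    rw [finsum_shift (fun x => φ x ^ 2) (unitVec i)]
    exact hn
  have hBs : ∑ x ∈ B, chi Γ x * φ x ^ 2 = s := by
    rw [← finsum_eq_sum_of_support_subset _ hsupp_chi1]
  have hBs' : ∀ i : Fin d, ∑ x ∈ B, chi Γ (x + unitVec i) * φ (x + unitVec i) ^ 2 = s := by
    intro i
    rw [← finsum_eq_sum_of_support_subset _ (hsupp_chi2 i)]
    rw [finsum_shift (fun x => chi Γ x * φ x ^ 2) (unitVec i)]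
  -- the Cauchy-Schwarz step
  set P : ℝ := ∑ p ∈ (Finset.univ : Finset (Fin d)) ×ˢ B,
      |φ p.2 - φ (p.2 + unitVec p.1)| * (|φ p.2| + |φ (p.2 + unitVec p.1)|) with hPdef
  have hP0 : 0 ≤ P := Finset.sum_nonneg fun p _ => by positivity
  have hF2 : ∑ p ∈ (Finset.univ : Finset (Fin d)) ×ˢ B,
      |φ p.2 - φ (p.2 + unitVec p.1)| ^ 2 = D := by
    rw [Finset.sum_product]
    dsimp only
    rw [hDdef]
    apply Finset.sum_congr rfl
    intro i _
    rw [finsum_eq_sum_of_support_subset _ (hsupp_D i)]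
    apply Finset.sum_congr rfl
    intro x _
    rw [sq_abs]
  have hG2 : ∑ p ∈ (Finset.univ : Finset (Fin d)) ×ˢ B,
      (|φ p.2| + |φ (p.2 + unitVec p.1)|) ^ 2 ≤ 4 * d := by
    calc ∑ p ∈ (Finset.univ : Finset (Fin d)) ×ˢ B,
          (|φ p.2| + |φ (p.2 + unitVec p.1)|) ^ 2
        ≤ ∑ p ∈ (Finset.univ : Finset (Fin d)) ×ˢ B,
          (2 * (φ p.2 ^ 2 + φ (p.2 + unitVec p.1) ^ 2)) := by
          apply Finset.sum_le_sum
          intro p _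
          nlinarith [sq_nonneg (|φ p.2| - |φ (p.2 + unitVec p.1)|), sq_abs (φ p.2),
            sq_abs (φ (p.2 + unitVec p.1))]
      _ = ∑ i : Fin d, (2 * (∑ x ∈ B, φ x ^ 2 + ∑ x ∈ B, φ (x + unitVec i) ^ 2)) := by
          rw [Finset.sum_product]
          dsimp only
          apply Finset.sum_congr rfl
          intro i _
          rw [← Finset.sum_add_distrib, Finset.mul_sum]
      _ = 4 * d := by
          rw [Finset.sum_congr rfl (fun i _ => by rw [hBφ2, hBφ2' i])]
          simp
          ring
  have hPD : P ≤ 2 * Real.sqrt ((d : ℝ) * D) := by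
    have hP2 : P ^ 2 ≤ D * (4 * d) := by
      calc P ^ 2 ≤ (∑ p ∈ (Finset.univ : Finset (Fin d)) ×ˢ B,
            |φ p.2 - φ (p.2 + unitVec p.1)| ^ 2) *
            ∑ p ∈ (Finset.univ : Finset (Fin d)) ×ˢ B,
            (|φ p.2| + |φ (p.2 + unitVec p.1)|) ^ 2 :=
            Finset.sum_mul_sq_le_sq_mul_sq _ _ _
        _ ≤ D * (4 * d) := by
            rw [hF2]
            exact mul_le_mul_of_nonneg_left hG2 hD0
    have h4 : D * (4 * (d:ℝ)) = (2 * Real.sqrt ((d:ℝ) * D)) ^ 2 := by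
      rw [mul_pow, Real.sq_sqrt (by positivity)]
      ring
    nlinarith [Real.sqrt_nonneg ((d:ℝ) * D)]
  -- assemble the main estimate
  have hT : ∑ i, ∑ᶠ x, |g x - g (x + unitVec i)| ≤ 2 * Real.sqrt ((d:ℝ) * D) + 2 * d * s := by
    calc ∑ i, ∑ᶠ x, |g x - g (x + unitVec i)|
        = ∑ i, ∑ x ∈ B, |g x - g (x + unitVec i)| := by
          apply Finset.sum_congr rfl
          intro i _
          exact finsum_eq_sum_of_support_subset _ (hsupp_gedge i)
      _ ≤ ∑ i, ∑ x ∈ B, (|φ x - φ (x + unitVec i)| * (|φ x| + |φ (x + unitVec i)|)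
            + chi Γ x * φ x ^ 2 + chi Γ (x + unitVec i) * φ (x + unitVec i) ^ 2) := by
          apply Finset.sum_le_sum
          intro i _
          exact Finset.sum_le_sum fun x _ => hpt i x
      _ = P + (d : ℝ) * s + (d : ℝ) * s := by
          have : ∀ i : Fin d, ∑ x ∈ B,
              (|φ x - φ (x + unitVec i)| * (|φ x| + |φ (x + unitVec i)|)
                + chi Γ x * φ x ^ 2 + chi Γ (x + unitVec i) * φ (x + unitVec i) ^ 2)
              = (∑ x ∈ B, |φ x - φ (x + unitVec i)| * (|φ x| + |φ (x + unitVec i)|)) + s + s := by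
            intro i
            rw [Finset.sum_add_distrib, Finset.sum_add_distrib, hBs, hBs' i]
          rw [Finset.sum_congr rfl (fun i _ => this i), Finset.sum_add_distrib,
            Finset.sum_add_distrib, Finset.sum_const, hPdef,
            Finset.sum_product]
          simp [nsmul_eq_mul]
      _ ≤ 2 * Real.sqrt ((d:ℝ) * D) + 2 * d * s := by linarith
  -- conclude via the algebraic lemma
  have hdd : (d:ℝ) = 1 ∨ 2 ≤ (d:ℝ) := by
    rcases Nat.lt_or_ge d 2 with h | h
    · left
      have : d = 1 := by omega
      rw [this]; norm_num
    · right
      exact_mod_cast h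
  have halg := alg hdd hm0 hm1 hD0 hs0 (le_trans hco hT)
  rw [hE]
  have hts : (2 * (d:ℝ) - 1) * s ≤ t * s := mul_le_mul_of_nonneg_right ht hs0
  linarith

/-! ### Isoperimetric lower bound via tiling -/

lemma ediv_eq_iff {a b q : ℤ} (hb : 0 < b) : a / b = q ↔ b * q ≤ a ∧ a < b * q + b := by
  have h3 := Int.mul_ediv_add_emod a b
  have hr0 := Int.emod_nonneg a (ne_of_gt hb)
  have hrb := Int.emod_lt_of_pos a hb
  constructor
  · rintro rfl
    constructor <;> linarith
  · rintro ⟨h1, h2⟩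
    have hlt : b * (a / b) < b * (q + 1) := by nlinarith
    have hgt : b * q < b * (a / b + 1) := by nlinarith
    have e1 : a / b < q + 1 := lt_of_mul_lt_mul_left hlt hb.le
    have e2 : q < a / b + 1 := lt_of_mul_lt_mul_left hgt hb.le
    omega

/-- box assignment map -/
def zmap {d : ℕ} (K : ℕ) (y : Zd d) : Zd d := fun i => (y i + ((K / 2 : ℕ) : ℤ)) / (K : ℤ)

lemma zmap_eq_iff {K : ℕ} (hK : 0 < K) (y z : Zd d) :
    zmap K y = z ↔ ∀ i, (K:ℤ) * z i ≤ y i + ((K / 2 : ℕ) : ℤ) ∧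
      y i + ((K / 2 : ℕ) : ℤ) < (K:ℤ) * z i + K := by
  rw [funext_iff]
  apply forall_congr'
  intro i
  exact ediv_eq_iff (by exact_mod_cast hK)

lemma lam0_zmap {K : ℕ} (hK : 0 < K) (z : Zd d) {γ : Zd d}
    (hγ : γ ∈ Lam0 K (fun i => (K : ℤ) * z i)) : zmap K γ = z := by
  rw [zmap_eq_iff hK]
  intro i
  have h := hγ i
  simp only at h
  set u : ℤ := (K:ℤ) * z i with hu
  set n : ℕ := (γ i - u).natAbs with hn
  have hcase : γ i - u = (n:ℤ) ∨ γ i - u = -(n:ℤ) := Int.natAbs_eq _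
  omega

lemma tile_card {K : ℕ} (hK : 0 < K) (z : Zd d) (A : Finset (Zd d)) :
    (A.filter (fun y => zmap K y = z)).card ≤ K ^ d := by
  classical
  have : (Finset.univ : Finset (Fin d → Fin K)).card = K ^ d := by
    simp [Finset.card_univ]
  rw [← this]
  apply Finset.card_le_card_of_injOn
    (fun y => fun i => (⟨(y i + ((K / 2 : ℕ) : ℤ) - (K:ℤ) * z i).toNat % K, Nat.mod_lt _ hK⟩ : Fin K))
  · intro y _
    exact Finset.mem_univ _
  · intro y hy y' hy' hf
    simp only [Finset.coe_filter, Set.mem_setOf_eq] at hy hy'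
    have hb := (zmap_eq_iff hK y z).1 hy.2
    have hb' := (zmap_eq_iff hK y' z).1 hy'.2
    funext i
    have h1 := hb i
    have h2 := hb' i
    have := congrFun hf i
    simp only [Fin.mk.injEq] at this
    set u : ℤ := (K:ℤ) * z i with hu
    have hy1 : ((y i + ((K/2:ℕ):ℤ) - u).toNat) < K := by omega
    have hy2 : ((y' i + ((K/2:ℕ):ℤ) - u).toNat) < K := by omega
    rw [Nat.mod_eq_of_lt hy1, Nat.mod_eq_of_lt hy2] at this
    omega

/-- the canonical path argument: any occupied tile yields a boundary edge -/
lemma path_lemma {K : ℕ} (hK : 0 < K) (A : Finset (Zd d)) (z γ : Zd d)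
    (hγz : zmap K γ = z) (hγA : γ ∉ A) :
    ∀ n (x : Zd d), dist1 x γ ≤ n → x ∈ A → zmap K x = z →
      ∃ p : Zd d × Fin d × Bool, p.1 ∈ A ∧ zmap K p.1 = z ∧
        (p.1 + (if p.2.2 then unitVec p.2.1 else -unitVec p.2.1)) ∉ A := by
  classical
  intro n
  induction n with
  | zero =>
      intro x hdist hxA hxz
      exfalso
      have : x = γ := by
        funext j
        have : (x j - γ j).natAbs = 0 := by
          have hz : dist1 x γ = 0 := le_antisymm hdist (Nat.zero_le _)
          have := Finset.sum_eq_zero_iff.1 hz j (Finset.mem_univ j)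
          exact this
        omega
      exact hγA (this ▸ hxA)
  | succ n ih =>
      intro x hdist hxA hxz
      have hxγ : x ≠ γ := fun h => hγA (h ▸ hxA)
      obtain ⟨i, hi⟩ : ∃ i, x i ≠ γ i := by
        by_contra h
        push_neg at h
        exact hxγ (funext h)
      set b : Bool := decide (x i < γ i) with hb
      set x' : Zd d := x + (if b then unitVec i else -unitVec i) with hx'
      have hx'j : ∀ j, j ≠ i → x' j = x j := by
        intro j hj
        rcases Bool.eq_false_or_eq_true b with h | h <;>
          simp [hx', h, unitVec, Pi.add_apply, hj]
      have hx'i : (x i < γ i ∧ x' i = x i + 1) ∨ (γ i < x i ∧ x' i = x i - 1) := by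
        rcases lt_or_gt_of_ne hi with h | h
        · left
          refine ⟨h, ?_⟩
          have : b = true := by simp [hb, h]
          simp [hx', this, unitVec, Pi.add_apply]
        · right
          refine ⟨h, ?_⟩
          have : b = false := by simp [hb]; omega
          simp [hx', this, unitVec, Pi.add_apply]
          omega
      have hx'z : zmap K x' = z := by
        rw [zmap_eq_iff hK]
        intro j
        have h1 := (zmap_eq_iff hK x z).1 hxz j
        have h2 := (zmap_eq_iff hK γ z).1 hγz j
        by_cases hj : j = i
        · subst hj
          set u : ℤ := (K:ℤ) * z j with hu
          omega
        · rw [hx'j j hj]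
          exact h1
      have hdist' : dist1 x' γ ≤ n := by
        have e1 : dist1 x γ = (x i - γ i).natAbs + ∑ j ∈ Finset.univ.erase i,
            (x j - γ j).natAbs := by
          rw [dist1, ← Finset.add_sum_erase _ _ (Finset.mem_univ i)]
        have e2 : dist1 x' γ = (x' i - γ i).natAbs + ∑ j ∈ Finset.univ.erase i,
            (x j - γ j).natAbs := by
          rw [dist1, ← Finset.add_sum_erase _ _ (Finset.mem_univ i)]
          congr 1
          apply Finset.sum_congr rfl
          intro j hj
          rw [hx'j j (Finset.ne_of_mem_erase hj)]
        have e3 : (x' i - γ i).natAbs + 1 = (x i - γ i).natAbs := by omega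
        omega
      by_cases hx'A : x' ∈ A
      · exact ih x' hdist' hx'A hx'z
      · exact ⟨(x, i, b), hxA, hxz, hx'A⟩

/-- boundary edge count -/
lemma qform_card (A : Finset (Zd d)) :
    qform A = (((A ×ˢ ((Finset.univ : Finset (Fin d)) ×ˢ (Finset.univ : Finset Bool))).filter
      (fun p => (p.1 + (if p.2.2 then unitVec p.2.1 else -unitVec p.2.1)) ∉ A)).card : ℝ) := by
  classical
  rw [Finset.card_filter]
  push_cast
  rw [Finset.sum_product]
  rw [qform]
  apply Finset.sum_congr rfl
  intro x hx
  rw [Finset.sum_product]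
  rw [negLap]
  apply Finset.sum_congr rfl
  intro i _
  have hx1 : chi (↑A : Set (Zd d)) x = 1 := chi_mem (by simpa using hx)
  have hsub : x - unitVec i = x + -unitVec i := by abel
  rw [Fintype.sum_bool]
  simp only [if_true, if_false]
  rw [hx1, hsub]
  by_cases h1 : x + unitVec i ∈ A <;> by_cases h2 : x + -unitVec i ∈ A <;>
    simp [chi_mem, chi_not_mem, h1, h2]

lemma card_le_qform {K Q : ℕ} {Γ : Set (Zd d)} (hK : 0 < K) (hQ : 0 < Q)
    (hΓ : RelDense Γ K Q) (A : Finset (Zd d)) (hsub : (↑A : Set (Zd d)) ⊆ Γᶜ) :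
    (A.card : ℝ) ≤ (K:ℝ) ^ d * qform A := by
  classical
  set Zocc := A.image (zmap K) with hZocc
  -- step 1 : A.card ≤ K^d * Zocc.card
  have h1 : A.card ≤ K ^ d * Zocc.card := by
    rw [Finset.card_eq_sum_card_fiberwise (f := zmap K) (t := Zocc)
      (fun x hx => Finset.mem_image_of_mem _ hx)]
    calc ∑ z ∈ Zocc, (A.filter (fun y => zmap K y = z)).card
        ≤ ∑ _z ∈ Zocc, K ^ d := Finset.sum_le_sum fun z _ => tile_card hK z A
      _ = Zocc.card * K ^ d := by rw [Finset.sum_const, smul_eq_mul]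
      _ = K ^ d * Zocc.card := mul_comm _ _
  -- step 2 : Zocc.card ≤ boundary count
  have hex : ∀ z ∈ Zocc, ∃ p : Zd d × Fin d × Bool, p.1 ∈ A ∧ zmap K p.1 = z ∧
      (p.1 + (if p.2.2 then unitVec p.2.1 else -unitVec p.2.1)) ∉ A := by
    intro z hz
    obtain ⟨x, hxA, hxz⟩ := Finset.mem_image.1 hz
    have hne : (Γ ∩ Lam0 K fun i => (K : ℤ) * z i).Nonempty := by
      apply Set.nonempty_of_ncard_ne_zero
      have := hΓ z
      omega
    obtain ⟨γ, hγΓ, hγL⟩ := hne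
    have hγA : γ ∉ A := fun h => (hsub (by exact_mod_cast h)) hγΓ
    exact path_lemma hK A z γ (lam0_zmap hK z hγL) hγA (dist1 x γ) x le_rfl hxA hxz
  set BD := ((A ×ˢ ((Finset.univ : Finset (Fin d)) ×ˢ (Finset.univ : Finset Bool))).filter
      (fun p => (p.1 + (if p.2.2 then unitVec p.2.1 else -unitVec p.2.1)) ∉ A)) with hBD
  have h2 : Zocc.card ≤ BD.card := by
    apply Finset.card_le_card_of_surjOn (fun p => zmap K p.1)
    intro z hz
    obtain ⟨p, hp1, hp2, hp3⟩ := hex z (by exact_mod_cast hz)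
    refine ⟨p, ?_, hp2⟩
    rw [hBD, Finset.mem_coe, Finset.mem_filter]
    exact ⟨Finset.mem_product.2 ⟨hp1, by simp⟩, hp3⟩
  rw [qform_card, ← hBD]
  calc (A.card : ℝ) ≤ ((K ^ d * Zocc.card : ℕ) : ℝ) := by exact_mod_cast h1
    _ ≤ ((K ^ d * BD.card : ℕ) : ℝ) := by exact_mod_cast Nat.mul_le_mul_left _ h2
    _ = (K:ℝ) ^ d * BD.card := by push_cast; ring

lemma Kstar_pos {K : ℕ} (hK : 0 < K) : 0 < Kstar K := by
  unfold Kstar; split <;> omega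

lemma le_Kstar (K : ℕ) : K ≤ Kstar K := by
  unfold Kstar; split <;> omega

lemma betaG_ge {K Q : ℕ} {Γ : Set (Zd d)} (hK : 0 < K) (hQ : 0 < Q) (hΓ : RelDense Γ K Q)
    (hne : Γ ≠ Set.univ) : 1 / (Kstar K : ℝ) ^ d ≤ betaG Γ := by
  have hKs0 : (0:ℝ) < (Kstar K : ℝ) := by exact_mod_cast Kstar_pos hK
  have hKKs : (K:ℝ) ≤ (Kstar K : ℝ) := by exact_mod_cast le_Kstar K
  apply le_csInf
  · obtain ⟨x, hx⟩ : ∃ x, x ∉ Γ := by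
      by_contra h
      push_neg at h
      exact hne (Set.eq_univ_iff_forall.2 h)
    refine ⟨qform {x} / (({x} : Finset (Zd d)).card : ℝ), {x}, Finset.singleton_nonempty x, ?_, rfl⟩
    intro y hy
    simp only [Finset.coe_singleton, Set.mem_singleton_iff] at hy
    subst hy
    exact hx
  · rintro r ⟨A, hAne, hAsub, rfl⟩
    have hcard : (0:ℝ) < A.card := by exact_mod_cast Finset.card_pos.2 hAne
    have h := card_le_qform hK hQ hΓ A hAsub
    have h2 : (A.card:ℝ) ≤ (Kstar K : ℝ) ^ d * qform A :=
      le_trans h (mul_le_mul_of_nonneg_right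
        (pow_le_pow_left₀ (by positivity) hKKs d) (qform_nonneg A))
    rw [div_le_div_iff₀ (by positivity) hcard]
    nlinarith

end StmtAux

open StmtAux

/-- for `t ≥ 2d - 1`,
`E_Γ(-Δ,t) ≥ (min{β(Γ),1})²/(6d-1) ≥ 1/((6d-1) K_*^{2d})`. -/
theorem stmt16 (d K Q : ℕ) (hd : 0 < d) (hK : 0 < K) (hQ : 0 < Q)
    (Γ : Set (Zd d)) (hne : Γ ≠ Set.univ) (hΓ : RelDense Γ K Q) :
    ∀ t : ℝ, 2 * d - 1 ≤ t →
      min (betaG Γ) 1 ^ 2 / (6 * d - 1) ≤ EGt (fun _ => 0) Γ t ∧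
      1 / ((6 * (d : ℝ) - 1) * (Kstar K : ℝ) ^ (2 * d)) ≤
        min (betaG Γ) 1 ^ 2 / (6 * d - 1) := by
  intro t ht
  classical
  set m : ℝ := min (betaG Γ) 1 with hm
  have hd1 : (1:ℝ) ≤ (d:ℝ) := by exact_mod_cast hd
  have h6 : (0:ℝ) < 6 * (d:ℝ) - 1 := by linarith
  have hKs0 : (0:ℝ) < (Kstar K : ℝ) := by exact_mod_cast Kstar_pos hK
  have hKs1 : (1:ℝ) ≤ (Kstar K : ℝ) := by
    have := Kstar_pos hK
    exact_mod_cast this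
  have hβ := betaG_ge hK hQ hΓ hne
  have h1p : (1:ℝ) ≤ (Kstar K : ℝ) ^ d := by
    calc (1:ℝ) = 1 ^ d := (one_pow d).symm
      _ ≤ (Kstar K : ℝ) ^ d := pow_le_pow_left₀ (by norm_num) hKs1 d
  have hmlb : 1 / (Kstar K : ℝ) ^ d ≤ m :=
    le_min hβ (div_le_one_of_le₀ h1p (by positivity))
  have hm0 : 0 < m := lt_of_lt_of_le (by positivity) hmlb
  have hm1 : m ≤ 1 := min_le_right _ _
  have hq : ∀ A : Finset (Zd d), A.Nonempty → (↑A : Set (Zd d)) ⊆ Γᶜ → m * A.card ≤ qform A :=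
    fun A hA hs => qform_ge (min_le_left _ _) hA hs
  constructor
  · -- main spectral bound
    rw [EGt, E0]
    apply le_csInf
    · -- the variational set is nonempty : delta function at the origin
      set φ0 : Zd d → ℝ := fun x => if x = 0 then 1 else 0 with hφ0
      have hsupp : Function.support φ0 ⊆ ({(0 : Zd d)} : Set (Zd d)) := by
        intro x hx
        simp only [Function.mem_support, hφ0] at hx
        by_contra h
        simp only [Set.mem_singleton_iff] at h
        simp [h] at hx
      have hfin : (Function.support φ0).Finite := (Set.finite_singleton _).subset hsupp
      have hnorm : norm2 φ0 = 1 := by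
        rw [norm2]
        have : ∑ᶠ x, φ0 x ^ 2 = ∑ x ∈ ({(0:Zd d)} : Finset (Zd d)), φ0 x ^ 2 := by
          apply finsum_eq_sum_of_support_subset
          intro x hx
          simp only [Function.mem_support] at hx
          have : x ∈ Function.support φ0 := by
            intro h0
            apply hx
            rw [h0]
            norm_num
          simpa using hsupp this
        rw [this, Finset.sum_singleton, hφ0]
        norm_num
      exact ⟨_, φ0, hfin, hnorm, rfl⟩
    · rintro r ⟨φ, hφ, hnφ, rfl⟩
      exact energy_lower hd hm0 hm1 hq ht φ hφ hnφ
  · -- comparison of the two constants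
    have hX : (0:ℝ) < (Kstar K : ℝ) ^ (2 * d) := by positivity
    have he : (1 / (Kstar K : ℝ) ^ d) ^ 2 = 1 / (Kstar K : ℝ) ^ (2 * d) := by
      rw [div_pow, one_pow, ← pow_mul, mul_comm d 2]
    have hm2 : 1 / (Kstar K : ℝ) ^ (2 * d) ≤ m ^ 2 := by
      rw [← he]
      exact pow_le_pow_left₀ (by positivity) hmlb 2
    have hkey : (1:ℝ) ≤ m ^ 2 * (Kstar K : ℝ) ^ (2 * d) := by
      have := (div_le_iff₀ hX).1 hm2
      linarith
    rw [div_le_div_iff₀ (by positivity) h6]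
    nlinarith
end
end
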